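/- arXiv:1605.08298 — 10 statements merged into one kernel-verified Lean document; each statement's English description precedes it below -/
import Mathlib

section
/- Let A be a unital C*-algebra over ℂ and Ω a state on A. If (H, π, ξ) and (H′, π′, ξ′) are two GNS triples for Ω, then there exists a unitary operator U : H → H′ such that Uξ = ξ′ and U π(a) U⁻¹ = π′(a) for all a ∈ A. -/
open scoped ComplexOrder

/-- A state on a unital (C*-)algebra over ℂ: a linear functional which is
positive (`Ω (a* a) ≥ 0`, i.e. a nonnegative real) and normalized (`Ω 1 = 1`). -/
def IsState {A : Type*} [Ring A] [StarRing A] [Algebra ℂ A]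
    (Ω : A →ₗ[ℂ] ℂ) : Prop :=
  (∀ a : A, 0 ≤ Ω (star a * a)) ∧ Ω 1 = 1

/-- A GNS triple for a state `Ω` on `A`: a Hilbert space `H`, a unital
*-homomorphism `π : A → B(H)` and a cyclic unit vector `ξ` with
`Ω a = ⟨ξ, π a ξ⟩` for all `a`. -/
def IsGNSTriple {A : Type*} [NormedRing A] [StarRing A] [CStarRing A]
    [NormedAlgebra ℂ A] [StarModule ℂ A] [CompleteSpace A]
    (Ω : A →ₗ[ℂ] ℂ)
    (H : Type*) [NormedAddCommGroup H] [InnerProductSpace ℂ H] [CompleteSpace H]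
    (π : A →⋆ₐ[ℂ] H →L[ℂ] H) (ξ : H) : Prop :=
  ‖ξ‖ = 1 ∧
  (∀ a : A, Ω a = (inner ℂ ξ (π a ξ) : ℂ)) ∧
  Dense (↑(Submodule.span ℂ (Set.range fun a : A => π a ξ)) : Set H)

section aux

variable {A : Type*} [NormedRing A] [StarRing A] [CStarRing A]
    [NormedAlgebra ℂ A] [StarModule ℂ A] [CompleteSpace A]
    {H : Type*} [NormedAddCommGroup H] [InnerProductSpace ℂ H] [CompleteSpace H]

/-- `a ↦ π a ξ` as a linear map. -/
noncomputable def gnsVec (π : A →⋆ₐ[ℂ] H →L[ℂ] H) (ξ : H) : A →ₗ[ℂ] H :=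
  { toFun := fun a => π a ξ
    map_add' := fun a b => by simp [map_add]
    map_smul' := fun c a => by simp [map_smul] }

theorem gnsVec_apply (π : A →⋆ₐ[ℂ] H →L[ℂ] H) (ξ : H) (a : A) :
    gnsVec π ξ a = π a ξ := rfl

theorem gnsVec_inner (Ω : A →ₗ[ℂ] ℂ) (π : A →⋆ₐ[ℂ] H →L[ℂ] H) (ξ : H)
    (hΩ : ∀ a : A, Ω a = (inner ℂ ξ (π a ξ) : ℂ)) (a b : A) :
    (inner ℂ (gnsVec π ξ a) (gnsVec π ξ b) : ℂ) = Ω (star a * b) := by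
  rw [hΩ, map_mul, ContinuousLinearMap.mul_apply, gnsVec_apply, gnsVec_apply,
    map_star, ContinuousLinearMap.star_eq_adjoint, ContinuousLinearMap.adjoint_inner_right]

theorem gnsVec_span_range (π : A →⋆ₐ[ℂ] H →L[ℂ] H) (ξ : H) :
    Submodule.span ℂ (Set.range fun a : A => π a ξ) = LinearMap.range (gnsVec π ξ) := by
  apply le_antisymm
  · rw [Submodule.span_le]
    rintro x ⟨a, rfl⟩
    exact ⟨a, rfl⟩
  · rintro x ⟨a, rfl⟩
    exact Submodule.subset_span ⟨a, rfl⟩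

end aux

/-- **Uniqueness of the GNS representation**: two GNS triples for the same state
are unitarily equivalent, via a unitary mapping cyclic vector to cyclic vector and
intertwining the representations. -/
theorem gns_uniqueness {A : Type*} [NormedRing A] [StarRing A] [CStarRing A]
    [NormedAlgebra ℂ A] [StarModule ℂ A] [CompleteSpace A]
    (Ω : A →ₗ[ℂ] ℂ) (hΩ : IsState Ω)
    (H : Type*) [NormedAddCommGroup H] [InnerProductSpace ℂ H] [CompleteSpace H]
    (π : A →⋆ₐ[ℂ] H →L[ℂ] H) (ξ : H)
    (H' : Type*) [NormedAddCommGroup H'] [InnerProductSpace ℂ H'] [CompleteSpace H']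
    (π' : A →⋆ₐ[ℂ] H' →L[ℂ] H') (ξ' : H')
    (h : IsGNSTriple Ω H π ξ) (h' : IsGNSTriple Ω H' π' ξ') :
    ∃ U : H ≃ₗᵢ[ℂ] H', U ξ = ξ' ∧ ∀ (a : A) (x : H), U (π a x) = π' a (U x) := by
  obtain ⟨hξ, hrep, hdense⟩ := h
  obtain ⟨hξ', hrep', hdense'⟩ := h'
  set L : A →ₗ[ℂ] H := gnsVec π ξ with hLdef
  set L' : A →ₗ[ℂ] H' := gnsVec π' ξ' with hL'def
  have hnorm : ∀ a : A, ‖L a‖ = ‖L' a‖ := by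
    intro a
    have h1 : (inner ℂ (L a) (L a) : ℂ) = inner ℂ (L' a) (L' a) := by
      rw [gnsVec_inner Ω π ξ hrep, gnsVec_inner Ω π' ξ' hrep']
    rw [inner_self_eq_norm_sq_to_K, inner_self_eq_norm_sq_to_K] at h1
    have h2 : (‖L a‖ : ℝ) ^ 2 = (‖L' a‖ : ℝ) ^ 2 := by exact_mod_cast h1
    nlinarith [norm_nonneg (L a), norm_nonneg (L' a)]
  have hker : LinearMap.ker L ≤ LinearMap.ker L' := by
    intro a ha
    rw [LinearMap.mem_ker] at ha ⊢
    rw [← norm_eq_zero, ← hnorm, ha, norm_zero]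
  -- the map on the dense range
  let f₀ : ↥(LinearMap.range L) →ₗ[ℂ] H' :=
    ((LinearMap.ker L).liftQ L' hker).comp (L.quotKerEquivRange.symm.toLinearMap)
  have hf₀ : ∀ a : A, f₀ ⟨L a, ⟨a, rfl⟩⟩ = L' a := by
    intro a
    have : L.quotKerEquivRange.symm ⟨L a, ⟨a, rfl⟩⟩ = Submodule.Quotient.mk a := by
      apply L.quotKerEquivRange.injective
      rw [LinearEquiv.apply_symm_apply]
      ext
      exact (L.quotKerEquivRange_apply_mk a).symm
    simp only [f₀, LinearMap.comp_apply, LinearEquiv.coe_toLinearMap, this]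
    exact Submodule.liftQ_apply _ L' a
  have hf₀norm : ∀ x : ↥(LinearMap.range L), ‖f₀ x‖ = ‖x‖ := by
    rintro ⟨x, a, rfl⟩
    rw [hf₀ a, ← hnorm a]
    rfl
  let fiso : ↥(LinearMap.range L) →ₗᵢ[ℂ] H' := ⟨f₀, hf₀norm⟩
  -- density of range L in H
  have hdL : Dense (↑(LinearMap.range L) : Set H) := by
    rwa [gnsVec_span_range] at hdense
  have hdL' : Dense (↑(LinearMap.range L') : Set H') := by
    rwa [gnsVec_span_range] at hdense'
  have hdr : DenseRange ((LinearMap.range L).subtypeL) := by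
    have : Set.range ((LinearMap.range L).subtypeL) = ↑(LinearMap.range L) :=
      Subtype.range_coe
    rwa [DenseRange, this]
  have hui : IsUniformInducing ((LinearMap.range L).subtypeL) :=
    isometry_subtype_coe.isUniformInducing
  let U₀ : H →L[ℂ] H' := fiso.toContinuousLinearMap.extend
    (LinearMap.range L).subtypeL
  have hU₀ : ∀ a : A, U₀ (L a) = L' a := by
    intro a
    have := ContinuousLinearMap.extend_eq fiso.toContinuousLinearMap
      (e := (LinearMap.range L).subtypeL) hdr hui ⟨L a, ⟨a, rfl⟩⟩
    exact this.trans (hf₀ a)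
  have hU₀norm : ∀ x : H, ‖U₀ x‖ = ‖x‖ := by
    have : Set.EqOn (fun x => ‖U₀ x‖) (fun x => ‖x‖) (↑(LinearMap.range L) : Set H) := by
      rintro x ⟨a, rfl⟩
      simp only [hU₀ a]
      exact (hnorm a).symm
    exact fun x => congrFun (Continuous.ext_on hdL
      (continuous_norm.comp U₀.continuous) continuous_norm this) x
  let Uiso : H →ₗᵢ[ℂ] H' := ⟨U₀.toLinearMap, hU₀norm⟩
  have hsurj : Function.Surjective Uiso := by
    have hclosed : IsClosed (Set.range Uiso) :=
      (Uiso.isometry.isClosedEmbedding).isClosed_range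
    have hsub : (↑(LinearMap.range L') : Set H') ⊆ Set.range Uiso := by
      rintro x ⟨a, rfl⟩
      exact ⟨L a, hU₀ a⟩
    intro y
    have : y ∈ closure (↑(LinearMap.range L') : Set H') := hdL'.closure_eq ▸ Set.mem_univ y
    have := closure_minimal hsub hclosed this
    exact this
  refine ⟨LinearIsometryEquiv.ofSurjective Uiso hsurj, ?_, ?_⟩
  · have h1 : ξ = L 1 := by
      simp [hLdef, gnsVec_apply, map_one]
    have h1' : ξ' = L' 1 := by
      simp [hL'def, gnsVec_apply, map_one]
    rw [h1, h1', LinearIsometryEquiv.coe_ofSurjective]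
    exact hU₀ 1
  · intro a x
    simp only [LinearIsometryEquiv.coe_ofSurjective]
    have key : Set.EqOn (fun x => Uiso (π a x)) (fun x => π' a (Uiso x))
        (↑(LinearMap.range L) : Set H) := by
      rintro x ⟨b, rfl⟩
      have h1 : π a (L b) = L (a * b) := by
        simp [hLdef, gnsVec_apply, map_mul]
      have h2 : π' a (L' b) = L' (a * b) := by
        simp [hL'def, gnsVec_apply, map_mul]
      show Uiso (π a (L b)) = π' a (Uiso (L b))
      have hu1 : (Uiso : H → H') (L b) = L' b := hU₀ b
      have hu2 : (Uiso : H → H') (L (a * b)) = L' (a * b) := hU₀ (a * b)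
      rw [h1, hu2, hu1, h2]
    have cont1 : Continuous (fun x => Uiso (π a x)) :=
      U₀.continuous.comp (π a).continuous
    have cont2 : Continuous (fun x => π' a (Uiso x)) :=
      (π' a).continuous.comp U₀.continuous
    exact congrFun (Continuous.ext_on hdL cont1 cont2 key) x
end

section
/- Let (A₁, A₂) be a commuting algebraic bipartition of a unital C*-algebra A, let Ω be a state on A satisfying Ω(α₁α₂) = Ω(α₁)Ω(α₂) for all α₁ ∈ A₁ and α₂ ∈ A₂, and let (H, π, ξ) be a GNS triple for Ω. Then the linear span of the set {π(α₁)π(α₂)ξ : α₁ ∈ A₁, α₂ ∈ A₂} is dense in H, and for every nonzero vector φ = π(α₁)π(α₂)ξ of this form the normalized vector state ω(a) = ⟨φ, π(a)φ⟩/‖φ‖² satisfies the product property ω(β₁β₂) = ω(β₁)ω(β₂) for all β₁ ∈ A₁, β₂ ∈ A₂ (hence is (A₁,A₂)-separable). -/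
open scoped ComplexOrder

private lemma swap_mul {A : Type*} [Ring A] {x y : A} (h : x * y = y * x) (z : A) :
    x * (y * z) = y * (x * z) := by rw [← mul_assoc, h, mul_assoc]

/-- **Corollary 1**: given a commuting algebraic bipartition `(A₁, A₂)` of `A`
and a product (separable) state `Ω` with GNS triple `(H, π, ξ)`, the vectors
`π α₁ π α₂ ξ` (`α₁ ∈ A₁`, `α₂ ∈ A₂`) span a dense subspace of `H`, and the
normalized vector state of every nonzero such vector is a product state on the
bipartition (hence separable). -/
theorem separable_basis_of_GNS
    {A : Type*} [NormedRing A] [StarRing A] [CStarRing A]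
    [NormedAlgebra ℂ A] [StarModule ℂ A] [CompleteSpace A]
    (A₁ A₂ : StarSubalgebra ℂ A)
    -- `(A₁, A₂)` is a commuting algebraic bipartition:
    (h_inter : ∀ x : A, x ∈ A₁ → x ∈ A₂ → ∃ c : ℂ, x = algebraMap ℂ A c)
    (h_comm : ∀ x ∈ A₁, ∀ y ∈ A₂, x * y = y * x)
    (h_gen : ∀ a : A, a ∈ Submodule.span ℂ {x : A | ∃ y ∈ A₁, ∃ z ∈ A₂, x = y * z})
    (Ω : A →ₗ[ℂ] ℂ) (hΩ : IsState Ω)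
    (hprod : ∀ α₁ ∈ A₁, ∀ α₂ ∈ A₂, Ω (α₁ * α₂) = Ω α₁ * Ω α₂)
    -- `(H, π, ξ)` is a GNS triple for `Ω`:
    (H : Type*) [NormedAddCommGroup H] [InnerProductSpace ℂ H] [CompleteSpace H]
    (π : A →⋆ₐ[ℂ] H →L[ℂ] H) (ξ : H)
    (hξ : ‖ξ‖ = 1)
    (hrep : ∀ a : A, Ω a = (inner ℂ ξ (π a ξ) : ℂ))
    (hcyc : Dense (↑(Submodule.span ℂ (Set.range fun a : A => π a ξ)) : Set H)) :
    Dense (↑(Submodule.span ℂ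
        {v : H | ∃ α₁ ∈ A₁, ∃ α₂ ∈ A₂, v = π α₁ (π α₂ ξ)}) : Set H) ∧
    ∀ α₁ ∈ A₁, ∀ α₂ ∈ A₂, ∀ φ : H, φ = π α₁ (π α₂ ξ) → φ ≠ 0 →
      ∀ β₁ ∈ A₁, ∀ β₂ ∈ A₂,
        (inner ℂ φ (π (β₁ * β₂) φ) : ℂ) / (‖φ‖ ^ 2 : ℝ) =
          ((inner ℂ φ (π β₁ φ) : ℂ) / (‖φ‖ ^ 2 : ℝ)) *
          ((inner ℂ φ (π β₂ φ) : ℂ) / (‖φ‖ ^ 2 : ℝ)) := by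
  -- key computation of inner products
  have key : ∀ c b : A, (inner ℂ (π c ξ) (π b (π c ξ)) : ℂ) = Ω (star c * b * c) := by
    intro c b
    have h1 : Ω (star c * b * c) = (inner ℂ ξ (π (star c) (π b (π c ξ))) : ℂ) := by
      rw [hrep]
      congr 1
      rw [mul_assoc, map_mul, map_mul]
      rfl
    rw [h1, map_star, ContinuousLinearMap.star_eq_adjoint,
      ContinuousLinearMap.adjoint_inner_right]
  have hnorm : ∀ c : A, ((‖π c ξ‖ ^ 2 : ℝ) : ℂ) = Ω (star c * c) := by
    intro c
    have h1 : star c * c = star c * 1 * c := by rw [mul_one]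
    rw [h1, ← key c 1, map_one]
    simp only [ContinuousLinearMap.one_apply]
    exact_mod_cast (inner_self_eq_norm_sq_to_K (π c ξ)).symm
  constructor
  · -- density
    apply hcyc.mono
    apply Submodule.span_le.mpr
    rintro _ ⟨a, rfl⟩
    set L : A →ₗ[ℂ] H :=
      { toFun := fun a => π a ξ
        map_add' := by intro x y; simp
        map_smul' := by intro c x; simp }
    have h1 : π a ξ ∈ Submodule.map L
        (Submodule.span ℂ {x : A | ∃ y ∈ A₁, ∃ z ∈ A₂, x = y * z}) :=
      ⟨a, h_gen a, rfl⟩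
    rw [Submodule.map_span] at h1
    refine Submodule.span_mono ?_ h1
    rintro _ ⟨x, ⟨y, hy, z, hz, rfl⟩, rfl⟩
    refine ⟨y, hy, z, hz, ?_⟩
    show π (y * z) ξ = π y (π z ξ)
    rw [map_mul]; rfl
  · rintro α₁ hα₁ α₂ hα₂ φ rfl hφ β₁ hβ₁ β₂ hβ₂
    have hφc : π α₁ (π α₂ ξ) = π (α₁ * α₂) ξ := by rw [map_mul]; rfl
    rw [hφc] at hφ ⊢
    -- memberships
    have hsα₁ : star α₁ ∈ A₁ := star_mem hα₁
    have hsα₂ : star α₂ ∈ A₂ := star_mem hα₂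
    have hstarc : star (α₁ * α₂) = star α₂ * star α₁ := star_mul _ _
    -- rearrangements
    have e1 : star (α₁ * α₂) * (β₁ * β₂) * (α₁ * α₂)
        = (star α₁ * β₁ * α₁) * (star α₂ * β₂ * α₂) := by
      rw [hstarc]
      simp only [mul_assoc]
      rw [swap_mul (h_comm α₁ hα₁ β₂ hβ₂).symm,
          swap_mul (h_comm (star α₁) hsα₁ (star α₂) hsα₂).symm,
          swap_mul (h_comm β₁ hβ₁ (star α₂) hsα₂).symm,
          swap_mul (h_comm α₁ hα₁ (star α₂) hsα₂).symm]
    have e2 : star (α₁ * α₂) * β₁ * (α₁ * α₂)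
        = (star α₁ * β₁ * α₁) * (star α₂ * α₂) := by
      rw [hstarc]
      simp only [mul_assoc]
      rw [swap_mul (h_comm (star α₁) hsα₁ (star α₂) hsα₂).symm,
          swap_mul (h_comm β₁ hβ₁ (star α₂) hsα₂).symm,
          swap_mul (h_comm α₁ hα₁ (star α₂) hsα₂).symm]
    have e3 : star (α₁ * α₂) * β₂ * (α₁ * α₂)
        = (star α₁ * α₁) * (star α₂ * β₂ * α₂) := by
      rw [hstarc]
      simp only [mul_assoc]
      rw [swap_mul (h_comm α₁ hα₁ β₂ hβ₂).symm,
          swap_mul (h_comm (star α₁) hsα₁ (star α₂) hsα₂).symm,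
          swap_mul (h_comm α₁ hα₁ (star α₂) hsα₂).symm]
    have e4 : star (α₁ * α₂) * (α₁ * α₂)
        = (star α₁ * α₁) * (star α₂ * α₂) := by
      rw [hstarc]
      simp only [mul_assoc]
      rw [swap_mul (h_comm (star α₁) hsα₁ (star α₂) hsα₂).symm,
          swap_mul (h_comm α₁ hα₁ (star α₂) hsα₂).symm]
    set X := Ω (star α₁ * β₁ * α₁)
    set Y := Ω (star α₂ * β₂ * α₂)
    set P := Ω (star α₁ * α₁)
    set Q := Ω (star α₂ * α₂)
    have hm1 : star α₁ * β₁ * α₁ ∈ A₁ := mul_mem (mul_mem hsα₁ hβ₁) hα₁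
    have hm2 : star α₂ * β₂ * α₂ ∈ A₂ := mul_mem (mul_mem hsα₂ hβ₂) hα₂
    have hm3 : star α₁ * α₁ ∈ A₁ := mul_mem hsα₁ hα₁
    have hm4 : star α₂ * α₂ ∈ A₂ := mul_mem hsα₂ hα₂
    have k1 : (inner ℂ (π (α₁ * α₂) ξ) (π (β₁ * β₂) (π (α₁ * α₂) ξ)) : ℂ) = X * Y := by
      rw [key, e1, hprod _ hm1 _ hm2]
    have k2 : (inner ℂ (π (α₁ * α₂) ξ) (π β₁ (π (α₁ * α₂) ξ)) : ℂ) = X * Q := by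
      rw [key, e2, hprod _ hm1 _ hm4]
    have k3 : (inner ℂ (π (α₁ * α₂) ξ) (π β₂ (π (α₁ * α₂) ξ)) : ℂ) = P * Y := by
      rw [key, e3, hprod _ hm3 _ hm2]
    have k4 : ((‖π (α₁ * α₂) ξ‖ ^ 2 : ℝ) : ℂ) = P * Q := by
      rw [hnorm, e4, hprod _ hm3 _ hm4]
    have hPQ : P * Q ≠ 0 := by
      rw [← k4]
      simp only [ne_eq, Complex.ofReal_eq_zero, pow_eq_zero_iff, norm_eq_zero]
      exact fun h => hφ (by simpa using h)
    rw [k1, k2, k3, k4]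
    have hP : P ≠ 0 := fun h => hPQ (by rw [h, zero_mul])
    have hQ : Q ≠ 0 := fun h => hPQ (by rw [h, mul_zero])
    field_simp
end

section
/- Let A be a unital C*-algebra with grading automorphism θ and let (A₁, A₂) be a graded bipartition of A. Let Ω₁ and Ω₂ be states on A, and suppose there exists a state Ω on A such that Ω(α₁α₂) = Ω₁(α₁)Ω₂(α₂) for all α₁ ∈ A₁ and α₂ ∈ A₂. Then either Ω₁(α) = 0 for every odd α ∈ A₁, or Ω₂(α) = 0 for every odd α ∈ A₂. -/
open scoped ComplexOrder

lemma state_star {A : Type*} [Ring A] [StarRing A] [Algebra ℂ A] [StarModule ℂ A]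
    (Ω : A →ₗ[ℂ] ℂ) (h : IsState Ω) (a : A) :
    Ω (star a) = starRingEnd ℂ (Ω a) := by
  have him : ∀ b : A, (Ω (star b * b)).im = 0 := fun b => by
    have := h.1 b; rw [Complex.nonneg_iff] at this; exact this.2.symm
  have e1 : star (1 + a) * (1 + a) = 1 + a + star a + star a * a := by
    rw [star_add, star_one]; noncomm_ring
  have e2 : star (1 + Complex.I • a) * (1 + Complex.I • a)
      = 1 + Complex.I • a - Complex.I • star a + star a * a := by
    rw [star_add, star_one, star_smul, Complex.star_def, Complex.conj_I]
    rw [add_mul, mul_add, mul_add, one_mul, one_mul, mul_one, smul_mul_smul_comm]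
    rw [neg_mul, Complex.I_mul_I, neg_neg, one_smul, neg_smul]
    abel
  have h1 := him (1 + a)
  have h2 := him (1 + Complex.I • a)
  have h0 := him a
  rw [e1] at h1; rw [e2] at h2
  simp only [map_add, map_sub, map_smul, h.2, smul_eq_mul, Complex.add_im,
    Complex.sub_im, Complex.one_im, Complex.mul_im, Complex.mul_re,
    Complex.I_re, Complex.I_im, h0] at h1 h2
  apply Complex.ext <;> simp only [Complex.conj_re, Complex.conj_im] <;> linarith

lemma state_real_of_sa {A : Type*} [Ring A] [StarRing A] [Algebra ℂ A] [StarModule ℂ A]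
    (Ω : A →ₗ[ℂ] ℂ) (h : IsState Ω) (a : A) (ha : star a = a) :
    (Ω a).im = 0 := by
  have := state_star Ω h a
  rw [ha] at this
  have := congrArg Complex.im this
  simp only [Complex.conj_im] at this
  linarith

/-- **Lemma 2**: let `(A₁, A₂)` be a graded bipartition of a unital C*-algebra `A`
with grading automorphism `θ`, and let `Ω₁`, `Ω₂` be states on `A`.  If the
product functional `α₁α₂ ↦ Ω₁(α₁)Ω₂(α₂)` extends to a state `Ω` on `A`, then
`Ω₁` vanishes on the odd part of `A₁` or `Ω₂` vanishes on the odd part of `A₂`. -/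
theorem product_state_vanishes_on_odd
    {A : Type*} [NormedRing A] [StarRing A] [CStarRing A]
    [NormedAlgebra ℂ A] [StarModule ℂ A] [CompleteSpace A]
    -- the grading automorphism:
    (θ : A ≃⋆ₐ[ℂ] A) (hθ : ∀ a : A, θ (θ a) = a)
    (A₁ A₂ : StarSubalgebra ℂ A)
    -- `(A₁, A₂)` is a graded bipartition:
    (h_inv₁ : ∀ x ∈ A₁, θ x ∈ A₁) (h_inv₂ : ∀ x ∈ A₂, θ x ∈ A₂)
    (h_inter : ∀ x : A, x ∈ A₁ → x ∈ A₂ → ∃ c : ℂ, x = algebraMap ℂ A c)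
    (h_gen : ∀ a : A, a ∈ Submodule.span ℂ {x : A | ∃ y ∈ A₁, ∃ z ∈ A₂, x = y * z})
    (h_comm₁ : ∀ x ∈ A₁, θ x = x → ∀ y ∈ A₂, x * y = y * x)
    (h_comm₂ : ∀ y ∈ A₂, θ y = y → ∀ x ∈ A₁, x * y = y * x)
    (h_anti : ∀ x ∈ A₁, θ x = -x → ∀ y ∈ A₂, θ y = -y → x * y = -(y * x))
    -- the states:
    (Ω₁ Ω₂ : A →ₗ[ℂ] ℂ) (hΩ₁ : IsState Ω₁) (hΩ₂ : IsState Ω₂)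
    (Ω : A →ₗ[ℂ] ℂ) (hΩ : IsState Ω)
    (hprod : ∀ α₁ ∈ A₁, ∀ α₂ ∈ A₂, Ω (α₁ * α₂) = Ω₁ α₁ * Ω₂ α₂) :
    (∀ α ∈ A₁, θ α = -α → Ω₁ α = 0) ∨ (∀ α ∈ A₂, θ α = -α → Ω₂ α = 0) := by
  by_contra hc
  push_neg at hc
  obtain ⟨⟨α, hαm, hαodd, hα0⟩, ⟨β, hβm, hβodd, hβ0⟩⟩ := hc
  have key : ∀ (B : StarSubalgebra ℂ A) (Ψ : A →ₗ[ℂ] ℂ), IsState Ψ →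
      ∀ γ ∈ B, θ γ = -γ → Ψ γ ≠ 0 →
      ∃ a ∈ B, star a = a ∧ θ a = -a ∧ (Ψ a).re ≠ 0 ∧ (Ψ a).im = 0 := by
    intro B Ψ hΨ γ hγ hodd hne
    have hsγ : star γ ∈ B := star_mem hγ
    have hsodd : θ (star γ) = -(star γ) := by
      rw [map_star, hodd, star_neg]
    have hΨs : Ψ (star γ) = starRingEnd ℂ (Ψ γ) := state_star Ψ hΨ γ
    by_cases hre : (Ψ γ).re ≠ 0
    · refine ⟨γ + star γ, add_mem hγ hsγ, ?_, ?_, ?_, ?_⟩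
      · rw [star_add, star_star, add_comm]
      · rw [map_add, hodd, hsodd, neg_add]
      · rw [map_add, hΨs]
        simp only [Complex.add_re, Complex.conj_re]
        intro h; apply hre; linarith
      · rw [map_add, hΨs]
        simp [Complex.conj_im]
    · push_neg at hre
      have him : (Ψ γ).im ≠ 0 := by
        intro h; exact hne (Complex.ext (by simp [hre]) (by simp [h]))
      refine ⟨Complex.I • (γ - star γ), SMulMemClass.smul_mem _ (sub_mem hγ hsγ), ?_, ?_, ?_, ?_⟩
      · rw [star_smul, star_sub, star_star, Complex.star_def, Complex.conj_I,
          neg_smul, smul_sub, smul_sub, neg_sub]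
      · rw [map_smul, map_sub, hodd, hsodd]
        rw [smul_sub, smul_sub, smul_neg, smul_neg]
        abel
      · rw [map_smul, map_sub, hΨs]
        simp only [smul_eq_mul, Complex.mul_re, Complex.I_re, Complex.I_im,
          Complex.sub_re, Complex.sub_im, Complex.conj_re, Complex.conj_im]
        intro h; apply him; linarith
      · rw [map_smul, map_sub, hΨs]
        simp only [smul_eq_mul, Complex.mul_im, Complex.I_re, Complex.I_im,
          Complex.sub_re, Complex.sub_im, Complex.conj_re, Complex.conj_im]
        linarith
  obtain ⟨a, haB, hasa, haodd, hare, haim⟩ := key A₁ Ω₁ hΩ₁ α hαm hαodd hα0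
  obtain ⟨b, hbB, hbsa, hbodd, hbre, hbim⟩ := key A₂ Ω₂ hΩ₂ β hβm hβodd hβ0
  have hba : b * a = -(a * b) := by
    rw [h_anti a haB haodd b hbB hbodd, neg_neg]
  have hcsa : star (Complex.I • (a * b)) = Complex.I • (a * b) := by
    rw [star_smul, Complex.star_def, Complex.conj_I, star_mul, hasa, hbsa, hba]
    simp
  have hval : Ω (Complex.I • (a * b)) = Complex.I * (Ω₁ a * Ω₂ b) := by
    rw [map_smul, hprod a haB b hbB, smul_eq_mul]
  have hreal := state_real_of_sa Ω hΩ _ hcsa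
  rw [hval] at hreal
  simp only [Complex.mul_im, Complex.I_re, Complex.I_im, Complex.mul_re,
    Complex.mul_im, haim, hbim] at hreal
  have : (Ω₁ a).re * (Ω₂ b).re ≠ 0 := mul_ne_zero hare hbre
  apply this
  linarith
end

section
/- Let A be a unital C*-algebra with grading automorphism θ and let (A₁, A₂) be a graded bipartition of A. If Ω is a state on A with Ω(α₁α₂) = Ω(α₁)Ω(α₂) for all α₁ ∈ A₁ and α₂ ∈ A₂, then either Ω(α) = 0 for every odd α ∈ A₁, or Ω(α) = 0 for every odd α ∈ A₂. -/
open scoped ComplexOrder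

lemma state_real_aux {A : Type*} [Ring A] [StarRing A] [Algebra ℂ A]
    (Ω : A →ₗ[ℂ] ℂ) (hpos : ∀ a : A, 0 ≤ Ω (star a * a)) (b : A) :
    starRingEnd ℂ (Ω b) + starRingEnd ℂ (Ω (star b)) = Ω b + Ω (star b) := by
  have key : ∀ a : A, starRingEnd ℂ (Ω (star a * a)) = Ω (star a * a) := by
    intro a
    have h := hpos a
    rw [Complex.le_def] at h
    exact Complex.conj_eq_iff_im.mpr h.2.symm
  have e : star (1 + b) * (1 + b) = 1 + b + star b + star b * b := by
    simp [star_add, add_mul, mul_add]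
    abel
  have h1 := key (1 + b)
  rw [e] at h1
  have h0 := key 1
  simp only [star_one, one_mul] at h0
  have h2 := key b
  simp only [map_add] at h1
  linear_combination h1 - h0 - h2

lemma state_herm {A : Type*} [Ring A] [StarRing A] [Algebra ℂ A] [StarModule ℂ A]
    (Ω : A →ₗ[ℂ] ℂ) (hpos : ∀ a : A, 0 ≤ Ω (star a * a)) (b : A) :
    Ω (star b) = starRingEnd ℂ (Ω b) := by
  have h1 := state_real_aux Ω hpos b
  have h2 := state_real_aux Ω hpos (Complex.I • b)
  simp only [star_smul, Complex.star_def, Complex.conj_I, neg_smul, map_neg, map_smul,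
    smul_eq_mul, map_mul, Complex.conj_conj, neg_mul] at h2
  linear_combination -h1/2 - Complex.I/2 * h2 +
    ((- starRingEnd ℂ (Ω b) + starRingEnd ℂ (Ω (star b)) - Ω b + Ω (star b))/2) * Complex.I_sq

/-- A product state on a graded bipartition `(A₁, A₂)` of a unital C*-algebra `A`
(i.e. `Ω(α₁α₂) = Ω(α₁)Ω(α₂)` on local operators) must vanish on the odd part of
`A₁` or on the odd part of `A₂`. -/
theorem product_state_vanishes_on_odd_component
    {A : Type*} [NormedRing A] [StarRing A] [CStarRing A]
    [NormedAlgebra ℂ A] [StarModule ℂ A] [CompleteSpace A]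
    -- the grading automorphism:
    (θ : A ≃⋆ₐ[ℂ] A) (hθ : ∀ a : A, θ (θ a) = a)
    (A₁ A₂ : StarSubalgebra ℂ A)
    -- `(A₁, A₂)` is a graded bipartition:
    (h_inv₁ : ∀ x ∈ A₁, θ x ∈ A₁) (h_inv₂ : ∀ x ∈ A₂, θ x ∈ A₂)
    (h_inter : ∀ x : A, x ∈ A₁ → x ∈ A₂ → ∃ c : ℂ, x = algebraMap ℂ A c)
    (h_gen : ∀ a : A, a ∈ Submodule.span ℂ {x : A | ∃ y ∈ A₁, ∃ z ∈ A₂, x = y * z})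
    (h_comm₁ : ∀ x ∈ A₁, θ x = x → ∀ y ∈ A₂, x * y = y * x)
    (h_comm₂ : ∀ y ∈ A₂, θ y = y → ∀ x ∈ A₁, x * y = y * x)
    (h_anti : ∀ x ∈ A₁, θ x = -x → ∀ y ∈ A₂, θ y = -y → x * y = -(y * x))
    -- the state:
    (Ω : A →ₗ[ℂ] ℂ) (hΩ : IsState Ω)
    (hprod : ∀ α₁ ∈ A₁, ∀ α₂ ∈ A₂, Ω (α₁ * α₂) = Ω α₁ * Ω α₂) :
    (∀ α ∈ A₁, θ α = -α → Ω α = 0) ∨ (∀ α ∈ A₂, θ α = -α → Ω α = 0) := by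

  by_contra hcon
  push_neg at hcon
  obtain ⟨⟨a, ha, haodd, ha0⟩, ⟨b, hb, hbodd, hb0⟩⟩ := hcon
  have herm : ∀ x : A, Ω (star x) = starRingEnd ℂ (Ω x) := fun x => state_herm Ω hΩ.1 x
  have hsa : θ (star a) = -(star a) := by rw [map_star, haodd, star_neg]
  have hsb : θ (star b) = -(star b) := by rw [map_star, hbodd, star_neg]
  have hab : a * b = -(b * a) := h_anti a ha haodd b hb hbodd
  have e1 : Ω (a * b) = Ω a * Ω b := hprod a ha b hb
  have e2 : Ω (star a * star b) = starRingEnd ℂ (Ω a) * starRingEnd ℂ (Ω b) := by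
    rw [hprod _ (star_mem ha) _ (star_mem hb), herm, herm]
  have e3 : Ω (b * a) = Ω a * Ω b := by
    have hst : star (b * a) = star a * star b := star_mul b a
    have h4 := herm (b * a)
    rw [hst, e2] at h4
    have h5 := congrArg (starRingEnd ℂ) h4
    simpa only [map_mul, Complex.conj_conj] using h5.symm
  have hkey : Ω a * Ω b = -(Ω a * Ω b) := by
    have h6 := congrArg Ω hab
    rw [map_neg, e1, e3] at h6
    exact h6
  have hz : Ω a * Ω b = 0 := by linear_combination hkey / 2
  rcases mul_eq_zero.mp hz with h | h
  exacts [ha0 h, hb0 h]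
end

section
/- Let A be a unital C*-algebra with grading automorphism θ, let (A₁, A₂) be a graded bipartition of A, and let Ω be a state on A. If there exist an odd element α₁ ∈ A₁ and an odd element α₂ ∈ A₂ with Ω(α₁α₂) ≠ 0, then Ω is not (A₁,A₂)-separable; equivalently, every (A₁,A₂)-separable state vanishes on all products α₁α₂ with α₁ ∈ A₁ odd and α₂ ∈ A₂ odd. -/
open scoped ComplexOrder

/-- Fermionic separability of a state `Ω` with respect to the bipartition
`(A₁, A₂)`: `Ω` is a convex combination of product functionals
`α₁α₂ ↦ Ω_k⁽¹⁾(α₁)Ω_k⁽²⁾(α₂)`, each of which extends to a state on `A`. -/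
def IsSepStateF {A : Type*} [Ring A] [StarRing A] [Algebra ℂ A] [StarModule ℂ A]
    (A₁ A₂ : StarSubalgebra ℂ A) (Ω : A →ₗ[ℂ] ℂ) : Prop :=
  ∃ (n : ℕ) (lam : Fin n → ℝ) (Ω₁ Ω₂ : Fin n → (A →ₗ[ℂ] ℂ)),
    (∀ k, 0 ≤ lam k) ∧ (∑ k, lam k) = 1 ∧
    (∀ k, IsState (Ω₁ k)) ∧ (∀ k, IsState (Ω₂ k)) ∧
    (∀ k, ∃ ω : A →ₗ[ℂ] ℂ, IsState ω ∧
      ∀ α₁ ∈ A₁, ∀ α₂ ∈ A₂, ω (α₁ * α₂) = Ω₁ k α₁ * Ω₂ k α₂) ∧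
    ∀ α₁ ∈ A₁, ∀ α₂ ∈ A₂,
      Ω (α₁ * α₂) = ∑ k, (lam k : ℂ) * Ω₁ k α₁ * Ω₂ k α₂

lemma IsState'.im_eq_zero {A : Type*} [Ring A] [StarRing A] [Algebra ℂ A]
    {Ω : A →ₗ[ℂ] ℂ} (hΩ : (∀ a : A, 0 ≤ Ω (star a * a)) ∧ Ω 1 = 1)
    {a : A} (ha : star a = a) : (Ω a).im = 0 := by
  have h1 := hΩ.1 (1 + a)
  have h2 := hΩ.1 (1 - a)
  have e1 : star (1 + a) * (1 + a) = 1 + a + a + a * a := by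
    rw [star_add, star_one, ha]; noncomm_ring
  have e2 : star (1 - a) * (1 - a) = 1 - a - a + a * a := by
    rw [star_sub, star_one, ha]; noncomm_ring
  rw [e1] at h1; rw [e2] at h2
  have i1 := (Complex.nonneg_iff.mp h1).2
  have i2 := (Complex.nonneg_iff.mp h2).2
  have key : Ω (1 + a + a + a*a) - Ω (1 - a - a + a*a) = 4 * Ω a := by
    simp only [map_add, map_sub, map_one]; ring
  have him : (Ω (1+a+a+a*a) - Ω (1-a-a+a*a)).im = 0 := by
    rw [Complex.sub_im, ← i1, ← i2]; ring
  rw [key] at him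
  simpa [Complex.mul_im] using him

lemma IsState'.re_eq_zero {A : Type*} [Ring A] [StarRing A] [Algebra ℂ A] [StarModule ℂ A]
    {Ω : A →ₗ[ℂ] ℂ} (hΩ : (∀ a : A, 0 ≤ Ω (star a * a)) ∧ Ω 1 = 1)
    {c : A} (hc : star c = -c) : (Ω c).re = 0 := by
  have hsa : star (Complex.I • c) = Complex.I • c := by
    rw [star_smul, hc]
    simp [Complex.conj_I]
  have h := IsState'.im_eq_zero hΩ hsa
  rw [map_smul] at h
  simpa [Complex.mul_im] using h

/-- **Corollary 3 (entanglement criterion)**: for a graded bipartition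
`(A₁, A₂)`, a state which is nonvanishing on a product of two odd local elements
is not `(A₁,A₂)`-separable; equivalently, every separable state vanishes on all
such products. -/
theorem entanglement_criterion_odd_odd
    {A : Type*} [NormedRing A] [StarRing A] [CStarRing A]
    [NormedAlgebra ℂ A] [StarModule ℂ A] [CompleteSpace A]
    -- the grading automorphism:
    (θ : A ≃⋆ₐ[ℂ] A) (hθ : ∀ a : A, θ (θ a) = a)
    (A₁ A₂ : StarSubalgebra ℂ A)
    -- `(A₁, A₂)` is a graded bipartition:
    (h_inv₁ : ∀ x ∈ A₁, θ x ∈ A₁) (h_inv₂ : ∀ x ∈ A₂, θ x ∈ A₂)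
    (h_inter : ∀ x : A, x ∈ A₁ → x ∈ A₂ → ∃ c : ℂ, x = algebraMap ℂ A c)
    (h_gen : ∀ a : A, a ∈ Submodule.span ℂ {x : A | ∃ y ∈ A₁, ∃ z ∈ A₂, x = y * z})
    (h_comm₁ : ∀ x ∈ A₁, θ x = x → ∀ y ∈ A₂, x * y = y * x)
    (h_comm₂ : ∀ y ∈ A₂, θ y = y → ∀ x ∈ A₁, x * y = y * x)
    (h_anti : ∀ x ∈ A₁, θ x = -x → ∀ y ∈ A₂, θ y = -y → x * y = -(y * x))
    -- the state:
    (Ω : A →ₗ[ℂ] ℂ) (hΩ : IsState Ω) :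
    ((∃ α₁ ∈ A₁, ∃ α₂ ∈ A₂, θ α₁ = -α₁ ∧ θ α₂ = -α₂ ∧ Ω (α₁ * α₂) ≠ 0) →
        ¬ IsSepStateF A₁ A₂ Ω) ∧
    (IsSepStateF A₁ A₂ Ω →
      ∀ α₁ ∈ A₁, ∀ α₂ ∈ A₂, θ α₁ = -α₁ → θ α₂ = -α₂ → Ω (α₁ * α₂) = 0) := by
  -- decomposition of an odd element into self-adjoint odd parts
  have mk_parts : ∀ (B : StarSubalgebra ℂ A), (∀ x ∈ B, θ x ∈ B) →
      ∀ α ∈ B, θ α = -α →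
      ∃ u ∈ B, ∃ v ∈ B, θ u = -u ∧ θ v = -v ∧ star u = u ∧ star v = v ∧
        α = u + Complex.I • v := by
    intro B hB α hα hodd
    have hoddstar : θ (star α) = -(star α) := by
      rw [map_star, hodd, star_neg]
    refine ⟨(2⁻¹ : ℂ) • (α + star α),
        SMulMemClass.smul_mem _ (add_mem hα (star_mem hα)),
        (-(2⁻¹ * Complex.I)) • (α - star α),
        SMulMemClass.smul_mem _ (sub_mem hα (star_mem hα)), ?_, ?_, ?_, ?_, ?_⟩
    · rw [map_smul, map_add, hodd, hoddstar]; module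
    · rw [map_smul, map_sub, hodd, hoddstar]; module
    · rw [star_smul, star_add, star_star]
      congr 1
      · simp
      · abel
    · rw [star_smul, star_sub, star_star]
      rw [show star (-(2⁻¹ * Complex.I)) = 2⁻¹ * Complex.I by simp [Complex.conj_I],
        show star α - α = -(α - star α) by abel, smul_neg, ← neg_smul]
    · rw [smul_smul, show Complex.I * -(2⁻¹ * Complex.I) = 2⁻¹ by
        rw [mul_comm (2⁻¹ : ℂ) Complex.I, mul_neg, ← mul_assoc, Complex.I_mul_I]; norm_num]
      module
  have main : IsSepStateF A₁ A₂ Ω →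
      ∀ α₁ ∈ A₁, ∀ α₂ ∈ A₂, θ α₁ = -α₁ → θ α₂ = -α₂ → Ω (α₁ * α₂) = 0 := by
    rintro ⟨n, lam, Ω₁, Ω₂, hlam, hsum, hS1, hS2, hprod, hrep⟩ α₁ h₁ α₂ h₂ hodd₁ hodd₂
    rw [hrep α₁ h₁ α₂ h₂]
    apply Finset.sum_eq_zero
    intro k _
    obtain ⟨ω, hω, hωprod⟩ := hprod k
    -- core: for self-adjoint odd pairs, the product functional vanishes
    have key : ∀ a ∈ A₁, ∀ b ∈ A₂, θ a = -a → θ b = -b → star a = a → star b = b →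
        Ω₁ k a * Ω₂ k b = 0 := by
      intro a ha b hb hoa hob hsa hsb
      have hba : b * a = -(a * b) := by
        rw [h_anti a ha hoa b hb hob, neg_neg]
      have hsk : star (a * b) = -(a * b) := by
        rw [star_mul, hsb, hsa, hba]
      have hre : (ω (a * b)).re = 0 := IsState'.re_eq_zero hω hsk
      rw [hωprod a ha b hb] at hre
      have ia := IsState'.im_eq_zero (hS1 k) hsa
      have ib := IsState'.im_eq_zero (hS2 k) hsb
      apply Complex.ext
      · simpa using hre
      · simp [Complex.mul_im, ia, ib]
    obtain ⟨u, hu, v, hv, hou, hov, hsu, hsv, hdec₁⟩ := mk_parts A₁ h_inv₁ α₁ h₁ hodd₁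
    obtain ⟨w, hw, x, hx, how, hox, hsw, hsx, hdec₂⟩ := mk_parts A₂ h_inv₂ α₂ h₂ hodd₂
    have e1 : Ω₁ k α₁ = Ω₁ k u + Complex.I * Ω₁ k v := by
      rw [hdec₁, map_add, map_smul]; rfl
    have e2 : Ω₂ k α₂ = Ω₂ k w + Complex.I * Ω₂ k x := by
      rw [hdec₂, map_add, map_smul]; rfl
    have expand : (Ω₁ k u + Complex.I * Ω₁ k v) * (Ω₂ k w + Complex.I * Ω₂ k x)
        = (Ω₁ k u * Ω₂ k w) + Complex.I * (Ω₁ k u * Ω₂ k x)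
          + Complex.I * (Ω₁ k v * Ω₂ k w)
          + (Complex.I * Complex.I) * (Ω₁ k v * Ω₂ k x) := by ring
    rw [mul_assoc, e1, e2, expand,
      key u hu w hw hou how hsu hsw, key u hu x hx hou hox hsu hsx,
      key v hv w hw hov how hsv hsw, key v hv x hx hov hox hsv hsx]
    simp
  refine ⟨?_, main⟩
  rintro ⟨α₁, h₁, α₂, h₂, ho₁, ho₂, hne⟩ hsep
  exact hne (main hsep α₁ h₁ α₂ h₂ ho₁ ho₂)
end

section
/- Fix n ≥ 1 and 0 < p < 2n. Let τ(x) = 2^{−n}Tr(x) be the normalized trace on M_{2ⁿ}(ℂ), let B₁ be the unital ℂ-subalgebra of M_{2ⁿ}(ℂ) generated by m_1,…,m_p and B₂ the unital ℂ-subalgebra generated by m_{p+1},…,m_{2n}. Then τ(αβ) = τ(α)τ(β) for all α ∈ B₁ and β ∈ B₂ (the tracial state of the Clifford algebra is a product state, hence separable, for every mode bipartition). -/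
open Matrix

/-- The Pauli matrix `σ₁`. -/
def pauli1 : Matrix (Fin 2) (Fin 2) ℂ := !![0, 1; 1, 0]

/-- The Pauli matrix `σ₂`. -/
noncomputable def pauli2 : Matrix (Fin 2) (Fin 2) ℂ := !![0, -Complex.I; Complex.I, 0]

/-- The Pauli matrix `σ₃`. -/
def pauli3 : Matrix (Fin 2) (Fin 2) ℂ := !![1, 0; 0, -1]

/-- The `2n` Majorana matrices in `M_{2ⁿ}(ℂ) = M₂(ℂ)^{⊗n}` (identified with
matrices indexed by `Fin n → Fin 2`), given via the entrywise Kronecker-product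
formula: `m_{2j−1} = σ₀^{⊗(n−j)} ⊗ σ₁ ⊗ σ₃^{⊗(j−1)}` and
`m_{2j} = σ₀^{⊗(n−j)} ⊗ σ₂ ⊗ σ₃^{⊗(j−1)}` (0-indexed below). -/
noncomputable def majorana (n : ℕ) (j : Fin (2 * n)) :
    Matrix (Fin n → Fin 2) (Fin n → Fin 2) ℂ := fun x y =>
  ∏ i : Fin n,
    (if (i : ℕ) < (j : ℕ) / 2 then pauli3
     else if (i : ℕ) = (j : ℕ) / 2 then (if (j : ℕ) % 2 = 0 then pauli1 else pauli2)
     else (1 : Matrix (Fin 2) (Fin 2) ℂ)) (x i) (y i)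

namespace CliffordProdAux

/-- Single-site Pauli matrix indexed by `(x,z) ∈ (ℤ/2)²`. -/
noncomputable def pm (a : ZMod 2 × ZMod 2) : Matrix (Fin 2) (Fin 2) ℂ :=
  if a.1 = 0 then (if a.2 = 0 then 1 else pauli3)
  else (if a.2 = 0 then pauli1 else pauli2)

/-- The phase in the product of two single-site Paulis. -/
noncomputable def phC (a b : ZMod 2 × ZMod 2) : ℂ :=
  (if a.2 = 1 ∧ b.1 = 1 then (-1 : ℂ) else 1) * (if a.1 = 1 ∧ a.2 = 1 then Complex.I else 1) *
    (if b.1 = 1 ∧ b.2 = 1 then Complex.I else 1) *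
    (if a.1 + b.1 = 1 ∧ a.2 + b.2 = 1 then -Complex.I else 1)

lemma zmod2_cases : ∀ x : ZMod 2, x = 0 ∨ x = 1 := by decide

lemma pm_zero : pm 0 = 1 := by simp [pm]

lemma phC_zero : phC 0 0 = 1 := by simp [phC]

lemma pm_mul (a b : ZMod 2 × ZMod 2) : pm a * pm b = phC a b • pm (a + b) := by
  obtain ⟨a1, a2⟩ := a; obtain ⟨b1, b2⟩ := b
  rcases zmod2_cases a1 with h | h <;> subst h <;>
  rcases zmod2_cases a2 with h | h <;> subst h <;>
  rcases zmod2_cases b1 with h | h <;> subst h <;>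
  rcases zmod2_cases b2 with h | h <;> subst h <;>
  · ext i j; fin_cases i <;> fin_cases j <;>
      simp (config := { decide := true }) [pm, phC, pauli1, pauli2, pauli3, Prod.mk_add_mk,
        Matrix.mul_apply, Fin.sum_univ_two, Matrix.one_apply, Complex.ext_iff]

lemma pm_trace (a : ZMod 2 × ZMod 2) : (pm a).trace = if a = 0 then 2 else 0 := by
  obtain ⟨a1, a2⟩ := a
  rcases zmod2_cases a1 with h | h <;> subst h <;>
  rcases zmod2_cases a2 with h | h <;> subst h <;>
    simp (config := { decide := true }) [pm, pauli1, pauli2, pauli3, Matrix.trace_fin_two,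
      Prod.ext_iff]

/-- Pauli strings. -/
noncomputable def Qm (n : ℕ) (a : Fin n → ZMod 2 × ZMod 2) :
    Matrix (Fin n → Fin 2) (Fin n → Fin 2) ℂ :=
  fun x y => ∏ i, pm (a i) (x i) (y i)

lemma Qm_zero (n : ℕ) : Qm n 0 = 1 := by
  funext x y
  simp only [Qm, Pi.zero_apply, pm_zero, Matrix.one_apply]
  rw [Finset.prod_boole]
  simp [funext_iff]

lemma Qm_mul (n : ℕ) (a b : Fin n → ZMod 2 × ZMod 2) :
    Qm n a * Qm n b = (∏ i, phC (a i) (b i)) • Qm n (a + b) := by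
  funext x y
  have h1 : (Qm n a * Qm n b) x y
      = ∑ z : Fin n → Fin 2, ∏ i, (pm (a i) (x i) (z i) * pm (b i) (z i) (y i)) := by
    simp [Matrix.mul_apply, Qm, Finset.prod_mul_distrib]
  rw [h1, ← Fintype.prod_sum fun i t => pm (a i) (x i) t * pm (b i) t (y i)]
  have h2 : ∀ i : Fin n, (∑ t : Fin 2, pm (a i) (x i) t * pm (b i) t (y i))
      = phC (a i) (b i) * pm (a i + b i) (x i) (y i) := by
    intro i
    rw [← Matrix.mul_apply, pm_mul]
    simp
  rw [Finset.prod_congr rfl fun i _ => h2 i, Finset.prod_mul_distrib]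
  rfl

lemma Qm_trace (n : ℕ) (a : Fin n → ZMod 2 × ZMod 2) :
    (Qm n a).trace = if a = 0 then (2 : ℂ) ^ n else 0 := by
  have h1 : (Qm n a).trace = ∏ i, (pm (a i)).trace := by
    have : (Qm n a).trace = ∑ x : Fin n → Fin 2, ∏ i, pm (a i) (x i) (x i) := by
      simp [Matrix.trace, Matrix.diag, Qm]
    rw [this, ← Fintype.prod_sum fun i t => pm (a i) t t]
    refine Finset.prod_congr rfl fun i _ => ?_
    simp [Matrix.trace, Matrix.diag]
  rw [h1]
  by_cases h : a = 0
  · subst h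
    simp [pm_trace]
  · obtain ⟨i, hi⟩ : ∃ i, a i ≠ 0 := by
      by_contra hc
      push_neg at hc
      exact h (funext hc)
    rw [if_neg h]
    exact Finset.prod_eq_zero (Finset.mem_univ i) (by rw [pm_trace, if_neg hi])

/-- The `(ℤ/2)²`-valued symbol of the `j`-th Majorana operator. -/
def fvec (n : ℕ) (j : Fin (2 * n)) : Fin n → ZMod 2 × ZMod 2 := fun i =>
  (if (i : ℕ) = (j : ℕ) / 2 then 1 else 0,
   if (i : ℕ) < (j : ℕ) / 2 then 1
   else if (i : ℕ) = (j : ℕ) / 2 then (((j : ℕ) % 2 : ℕ) : ZMod 2) else 0)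

lemma majorana_eq (n : ℕ) (j : Fin (2 * n)) : majorana n j = Qm n (fvec n j) := by
  funext x y
  simp only [majorana, Qm]
  refine Finset.prod_congr rfl fun i _ => ?_
  rcases lt_trichotomy (i : ℕ) ((j : ℕ) / 2) with h | h | h
  · have hf : fvec n j i = (0, 1) := by
      simp only [fvec]; rw [if_neg (by omega : ¬ (i : ℕ) = (j : ℕ) / 2), if_pos h]
    rw [hf, if_pos h]
    simp (config := { decide := true }) [pm]
  · by_cases h2 : (j : ℕ) % 2 = 0
    · have hf : fvec n j i = (1, 0) := by
        simp only [fvec]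
        rw [if_pos h, if_neg (by omega : ¬ (i : ℕ) < (j : ℕ) / 2), if_pos h, h2]
        norm_num
      rw [hf, if_neg (by omega : ¬ (i : ℕ) < (j : ℕ) / 2), if_pos h, if_pos h2]
      simp (config := { decide := true }) [pm]
    · have h2' : (j : ℕ) % 2 = 1 := by omega
      have hf : fvec n j i = (1, 1) := by
        simp only [fvec]
        rw [if_pos h, if_neg (by omega : ¬ (i : ℕ) < (j : ℕ) / 2), if_pos h, h2']
        norm_num
      rw [hf, if_neg (by omega : ¬ (i : ℕ) < (j : ℕ) / 2), if_pos h, if_neg h2]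
      simp (config := { decide := true }) [pm]
  · have hf : fvec n j i = (0, 0) := by
      simp only [fvec]
      rw [if_neg (by omega : ¬ (i : ℕ) = (j : ℕ) / 2),
        if_neg (by omega : ¬ (i : ℕ) < (j : ℕ) / 2),
        if_neg (by omega : ¬ (i : ℕ) = (j : ℕ) / 2)]
    rw [hf, if_neg (by omega : ¬ (i : ℕ) < (j : ℕ) / 2),
      if_neg (by omega : ¬ (i : ℕ) = (j : ℕ) / 2)]
    have : ((0 : ZMod 2), (0 : ZMod 2)) = (0 : ZMod 2 × ZMod 2) := rfl
    rw [this, pm_zero]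

lemma sum_eq_pair {M : Type*} [AddCommMonoid M] {N : ℕ} (f : Fin N → M) (a b : Fin N)
    (hab : a ≠ b) (h : ∀ j, j ≠ a → j ≠ b → f j = 0) : ∑ j, f j = f a + f b := by
  rw [← Finset.sum_pair hab]
  refine (Finset.sum_subset (Finset.subset_univ _) fun x _ hx => ?_).symm
  simp only [Finset.mem_insert, Finset.mem_singleton, not_or] at hx
  exact h x hx.1 hx.2

lemma fvec_li (n : ℕ) : LinearIndependent (ZMod 2) (fvec n) := by
  rw [Fintype.linearIndependent_iff]
  intro g hg
  have H1 : ∀ i : ℕ, ∀ hi : i < n,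
      (∑ j, g j * (if i = (j : ℕ) / 2 then 1 else 0)) = (0 : ZMod 2) := by
    intro i hi
    have h0 := congrArg (fun v => (v ⟨i, hi⟩).1) hg
    simp only [Finset.sum_apply, Pi.smul_apply, Prod.fst_sum, Prod.smul_fst, smul_eq_mul, fvec,
      Pi.zero_apply, Prod.fst_zero, Fin.val_mk] at h0
    exact h0
  have H2 : ∀ i : ℕ, ∀ hi : i < n,
      (∑ j, g j * (if i < (j : ℕ) / 2 then 1
        else if i = (j : ℕ) / 2 then (((j : ℕ) % 2 : ℕ) : ZMod 2) else 0)) = (0 : ZMod 2) := by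
    intro i hi
    have h0 := congrArg (fun v => (v ⟨i, hi⟩).2) hg
    simp only [Finset.sum_apply, Pi.smul_apply, Prod.snd_sum, Prod.smul_snd, smul_eq_mul, fvec,
      Pi.zero_apply, Prod.snd_zero, Fin.val_mk] at h0
    exact h0
  have key : ∀ k : ℕ, ∀ j : Fin (2 * n), n - k ≤ (j : ℕ) / 2 → g j = 0 := by
    intro k
    induction k with
    | zero =>
      intro j hj
      have := j.isLt
      omega
    | succ k ih =>
      by_cases hk : n ≤ k
      · intro j hj
        exact ih j (by omega)
      · push_neg at hk
        set i : ℕ := n - (k + 1) with hi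
        have hin : i < n := by omega
        have h2i : 2 * i < 2 * n := by omega
        have h2i1 : 2 * i + 1 < 2 * n := by omega
        have hodd : g ⟨2 * i + 1, h2i1⟩ = 0 := by
          have h2 := H2 i hin
          rw [Finset.sum_eq_single (⟨2 * i + 1, h2i1⟩ : Fin (2 * n))] at h2
          · have hval : ((⟨2 * i + 1, h2i1⟩ : Fin (2 * n)) : ℕ) = 2 * i + 1 := rfl
            rw [hval, if_neg (by omega : ¬ i < (2 * i + 1) / 2),
              if_pos (by omega : i = (2 * i + 1) / 2),
              (by omega : (2 * i + 1) % 2 = 1), Nat.cast_one, mul_one] at h2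
            exact h2
          · intro j _ hne
            by_cases hlt : i < (j : ℕ) / 2
            · rw [ih j (by omega), zero_mul]
            · by_cases heq : i = (j : ℕ) / 2
              · have hj2 : (j : ℕ) = 2 * i ∨ (j : ℕ) = 2 * i + 1 := by omega
                rcases hj2 with hj2 | hj2
                · rw [if_neg hlt, if_pos heq, (by omega : (j : ℕ) % 2 = 0), Nat.cast_zero,
                    mul_zero]
                · exact absurd (Fin.ext hj2) hne
              · rw [if_neg hlt, if_neg heq, mul_zero]
          · intro hnm
            exact absurd (Finset.mem_univ _) hnm
        have heven : g ⟨2 * i, h2i⟩ = 0 := by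
          have h1 := H1 i hin
          rw [sum_eq_pair _ (⟨2 * i, h2i⟩ : Fin (2 * n)) (⟨2 * i + 1, h2i1⟩ : Fin (2 * n))
            (by simp [Fin.ext_iff]) ?_] at h1
          · have hv1 : ((⟨2 * i, h2i⟩ : Fin (2 * n)) : ℕ) = 2 * i := rfl
            have hv2 : ((⟨2 * i + 1, h2i1⟩ : Fin (2 * n)) : ℕ) = 2 * i + 1 := rfl
            rw [hv1, hv2, if_pos (by omega : i = 2 * i / 2),
              if_pos (by omega : i = (2 * i + 1) / 2), mul_one, mul_one, hodd, add_zero] at h1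
            exact h1
          · intro j hja hjb
            have hja' : (j : ℕ) ≠ 2 * i := fun h => hja (Fin.ext h)
            have hjb' : (j : ℕ) ≠ 2 * i + 1 := fun h => hjb (Fin.ext h)
            rw [if_neg (by omega : ¬ i = (j : ℕ) / 2), mul_zero]
        intro j hj
        by_cases hj2 : n - k ≤ (j : ℕ) / 2
        · exact ih j hj2
        · have : (j : ℕ) = 2 * i ∨ (j : ℕ) = 2 * i + 1 := by omega
          rcases this with h | h
          · rw [show j = (⟨2 * i, h2i⟩ : Fin (2 * n)) from Fin.ext h]; exact heven
          · rw [show j = (⟨2 * i + 1, h2i1⟩ : Fin (2 * n)) from Fin.ext h]; exact hodd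
  intro j
  exact key n j (by omega)

/-- Membership in the adjoin of Majoranas with indices in `S` implies membership in the span
of the Pauli strings with symbol in the `ℤ/2`-span of the corresponding symbols. -/
lemma mem_span_Q (n : ℕ) (S : Set (Fin (2 * n)))
    (x : Matrix (Fin n → Fin 2) (Fin n → Fin 2) ℂ)
    (hx : x ∈ Algebra.adjoin ℂ {x | ∃ j : Fin (2 * n), j ∈ S ∧ x = majorana n j}) :
    x ∈ Submodule.span ℂ
      (Qm n '' ((Submodule.span (ZMod 2) (fvec n '' S) : Submodule (ZMod 2) _) :
        Set (Fin n → ZMod 2 × ZMod 2))) := by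
  set A := Submodule.span (ZMod 2) (fvec n '' S) with hA
  set W := Submodule.span ℂ (Qm n '' (A : Set (Fin n → ZMod 2 × ZMod 2))) with hW
  have hQ : ∀ a ∈ A, Qm n a ∈ W := fun a ha => Submodule.subset_span ⟨a, ha, rfl⟩
  have hmul : ∀ x ∈ W, ∀ y ∈ W, x * y ∈ W := by
    have h2 : W * W ≤ W := by
      rw [hW, Submodule.span_mul_span]
      refine Submodule.span_le.2 ?_
      rintro z hz
      rw [Set.mem_mul] at hz
      obtain ⟨u, hu, v, hv, rfl⟩ := hz
      obtain ⟨a, ha, rfl⟩ := hu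
      obtain ⟨b, hb, rfl⟩ := hv
      rw [Qm_mul]
      exact Submodule.smul_mem _ _ (hQ _ (A.add_mem ha hb))
    intro x hx y hy
    exact h2 (Submodule.mul_mem_mul hx hy)
  refine Algebra.adjoin_induction (fun y hy => ?_) (fun r => ?_)
    (fun y z _ _ hy hz => W.add_mem hy hz) (fun y z _ _ hy hz => hmul y hy z hz) hx
  · obtain ⟨j, hj, rfl⟩ := hy
    rw [majorana_eq]
    exact hQ _ (Submodule.subset_span ⟨j, hj, rfl⟩)
  · rw [Algebra.algebraMap_eq_smul_one, ← Qm_zero n]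
    exact W.smul_mem r (hQ _ A.zero_mem)

lemma neg_self_zmod2 : ∀ x : ZMod 2 × ZMod 2, -x = x := by decide

end CliffordProdAux

open Matrix CliffordProdAux

/-- **The tracial state of the Clifford algebra is a product state for every
mode bipartition**: with `τ(x) = 2^{−n}Tr(x)`, `B₁` the unital subalgebra
generated by `m₁,…,m_p` and `B₂` the one generated by `m_{p+1},…,m_{2n}`, one
has `τ(αβ) = τ(α)τ(β)` for `α ∈ B₁`, `β ∈ B₂`. -/
theorem trace_state_product (n p : ℕ) (hn : 1 ≤ n) (hp0 : 0 < p) (hp : p < 2 * n)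
    (α β : Matrix (Fin n → Fin 2) (Fin n → Fin 2) ℂ)
    (hα : α ∈ Algebra.adjoin ℂ {x | ∃ j : Fin (2 * n), (j : ℕ) < p ∧ x = majorana n j})
    (hβ : β ∈ Algebra.adjoin ℂ {x | ∃ j : Fin (2 * n), p ≤ (j : ℕ) ∧ x = majorana n j}) :
    ((2 : ℂ) ^ n)⁻¹ * (α * β).trace =
      (((2 : ℂ) ^ n)⁻¹ * α.trace) * (((2 : ℂ) ^ n)⁻¹ * β.trace) := by
  classical
  set S1 : Set (Fin (2 * n)) := {j | (j : ℕ) < p} with hS1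
  set S2 : Set (Fin (2 * n)) := {j | p ≤ (j : ℕ)} with hS2
  set A1 := Submodule.span (ZMod 2) (fvec n '' S1) with hA1
  set A2 := Submodule.span (ZMod 2) (fvec n '' S2) with hA2
  have hdis : Disjoint A1 A2 := by
    refine (fvec_li n).disjoint_span_image ?_
    rw [Set.disjoint_left]
    intro j hj1 hj2
    simp only [hS1, hS2, Set.mem_setOf_eq] at hj1 hj2
    omega
  have hα' := mem_span_Q n S1 α hα
  have hβ' := mem_span_Q n S2 β hβ
  rw [← hA1] at hα'
  rw [← hA2] at hβ'
  have h2n : ((2 : ℂ) ^ n) ≠ 0 := pow_ne_zero _ two_ne_zero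
  -- the key computation on Pauli strings
  have key : ∀ a ∈ A1, ∀ b ∈ A2,
      ((2 : ℂ) ^ n)⁻¹ * (Qm n a * Qm n b).trace =
        (((2 : ℂ) ^ n)⁻¹ * (Qm n a).trace) * (((2 : ℂ) ^ n)⁻¹ * (Qm n b).trace) := by
    intro a ha b hb
    rw [Qm_mul, Matrix.trace_smul, Qm_trace, Qm_trace, Qm_trace]
    by_cases h : a + b = 0
    · have hba : b = a := by
        have h1 : b = -a := eq_neg_of_add_eq_zero_right h
        rw [h1]; funext i; exact neg_self_zmod2 (a i)
      rw [hba] at hb ⊢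
      have ha0 : a = 0 := Submodule.disjoint_def.mp hdis a ha hb
      subst ha0
      simp only [add_zero, if_pos rfl, Pi.zero_apply, phC_zero, Finset.prod_const_one, one_mul]
      field_simp
      simp only [if_true, one_smul]; ring
    · rw [if_neg h]
      have hab : a ≠ 0 ∨ b ≠ 0 := by
        by_contra hc
        push_neg at hc
        exact h (by rw [hc.1, hc.2, add_zero])
      rcases hab with h0 | h0
      · rw [if_neg h0]; ring_nf
      · rw [if_neg h0]; ring_nf
  -- bilinear extension
  have step1 : ∀ a ∈ A1, ∀ y ∈ Submodule.span ℂ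
      (Qm n '' (A2 : Set (Fin n → ZMod 2 × ZMod 2))),
      ((2 : ℂ) ^ n)⁻¹ * (Qm n a * y).trace =
        (((2 : ℂ) ^ n)⁻¹ * (Qm n a).trace) * (((2 : ℂ) ^ n)⁻¹ * y.trace) := by
    intro a ha y hy
    induction hy using Submodule.span_induction with
    | mem z hz =>
      obtain ⟨b, hb, rfl⟩ := hz
      exact key a ha b hb
    | zero => simp
    | add u v _ _ hu hv =>
      rw [Matrix.mul_add, Matrix.trace_add, Matrix.trace_add]
      rw [mul_add, hu, hv]
      ring
    | smul c u _ hu =>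
      rw [Matrix.mul_smul, Matrix.trace_smul, Matrix.trace_smul]
      simp only [smul_eq_mul]
      calc ((2:ℂ)^n)⁻¹ * (c * (Qm n a * u).trace)
          = c * (((2:ℂ)^n)⁻¹ * (Qm n a * u).trace) := by ring
        _ = c * ((((2:ℂ)^n)⁻¹ * (Qm n a).trace) * (((2:ℂ)^n)⁻¹ * u.trace)) := by rw [hu]
        _ = ((2:ℂ)^n)⁻¹ * (Qm n a).trace * (((2:ℂ)^n)⁻¹ * (c * u.trace)) := by ring
  have step2 : ∀ x ∈ Submodule.span ℂ (Qm n '' (A1 : Set (Fin n → ZMod 2 × ZMod 2))),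
      ((2 : ℂ) ^ n)⁻¹ * (x * β).trace =
        (((2 : ℂ) ^ n)⁻¹ * x.trace) * (((2 : ℂ) ^ n)⁻¹ * β.trace) := by
    intro x hx
    induction hx using Submodule.span_induction with
    | mem z hz =>
      obtain ⟨a, ha, rfl⟩ := hz
      exact step1 a ha β hβ'
    | zero => simp
    | add u v _ _ hu hv =>
      rw [Matrix.add_mul, Matrix.trace_add, Matrix.trace_add]
      rw [mul_add, hu, hv]
      ring
    | smul c u _ hu =>
      rw [Matrix.smul_mul, Matrix.trace_smul, Matrix.trace_smul]
      simp only [smul_eq_mul]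
      calc ((2:ℂ)^n)⁻¹ * (c * (u * β).trace)
          = c * (((2:ℂ)^n)⁻¹ * (u * β).trace) := by ring
        _ = c * ((((2:ℂ)^n)⁻¹ * u.trace) * (((2:ℂ)^n)⁻¹ * β.trace)) := by rw [hu]
        _ = ((2:ℂ)^n)⁻¹ * (c * u.trace) * (((2:ℂ)^n)⁻¹ * β.trace) := by ring
  exact step2 α hα'
end

section
/- Let e₁, e₂ be the standard orthonormal basis of ℂ² and let ψ = a₁e₁ + a₂e₂ be a unit vector. Then ⟨ψ, αβψ⟩ = ⟨ψ, αψ⟩⟨ψ, βψ⟩ holds for all α ∈ span_ℂ{1, σ₃} and β ∈ span_ℂ{1, σ₁} if and only if Im(conj(a₁)·a₂) = 0 and (|a₁| = |a₂| or Re(conj(a₁)·a₂) = 0); equivalently, if and only if ψ is a unimodular scalar multiple of one of the four vectors e₁, e₂, (e₁ + e₂)/√2, (e₁ − e₂)/√2. -/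
open Matrix

/-- The standard inner product on `ℂ²`. -/
noncomputable def ip2 (v w : Fin 2 → ℂ) : ℂ :=
  ∑ i : Fin 2, (starRingEnd ℂ) (v i) * w i

private lemma cond_iff_E (ψ : Fin 2 → ℂ) (hψ : ip2 ψ ψ = 1) :
    (∀ α ∈ Submodule.span ℂ ({1, pauli3} : Set (Matrix (Fin 2) (Fin 2) ℂ)),
      ∀ β ∈ Submodule.span ℂ ({1, pauli1} : Set (Matrix (Fin 2) (Fin 2) ℂ)),
        ip2 ψ ((α * β).mulVec ψ) = ip2 ψ (α.mulVec ψ) * ip2 ψ (β.mulVec ψ)) ↔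
    ((starRingEnd ℂ) (ψ 0) * ψ 1 - (starRingEnd ℂ) (ψ 1) * ψ 0 =
      ((starRingEnd ℂ) (ψ 0) * ψ 0 - (starRingEnd ℂ) (ψ 1) * ψ 1) *
      ((starRingEnd ℂ) (ψ 0) * ψ 1 + (starRingEnd ℂ) (ψ 1) * ψ 0)) := by
  simp only [ip2, Fin.sum_univ_two] at hψ
  constructor
  · intro h
    have := h pauli3 (Submodule.subset_span (by simp)) pauli1 (Submodule.subset_span (by simp))
    simp only [ip2, pauli1, pauli3, Matrix.mulVec, Matrix.mul_apply, dotProduct,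
      Fin.sum_univ_two, Matrix.cons_val', Matrix.cons_val_zero, Matrix.cons_val_one,
      Matrix.head_cons, Matrix.empty_val', Matrix.cons_val_fin_one, Matrix.head_fin_const, Matrix.of_apply] at this
    linear_combination this
  · intro hE α hα β hβ
    obtain ⟨s, t, rfl⟩ := Submodule.mem_span_pair.mp hα
    obtain ⟨u, v, rfl⟩ := Submodule.mem_span_pair.mp hβ
    simp only [ip2, pauli1, pauli3, Matrix.mulVec, Matrix.mul_apply, dotProduct,
      Fin.sum_univ_two, Matrix.add_apply, Matrix.smul_apply, Matrix.one_apply,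
      Matrix.cons_val', Matrix.cons_val_zero, Matrix.cons_val_one,
      Matrix.head_cons, Matrix.empty_val', Matrix.cons_val_fin_one, Matrix.head_fin_const, Matrix.of_apply,
      smul_eq_mul, Fin.one_eq_zero_iff, Fin.zero_eq_one_iff, if_true, if_false,
      Ne, OfNat.ofNat_ne_one, not_false_iff, mul_zero, mul_one, mul_neg, zero_add, add_zero]
    linear_combination t*v*hE - (s*u*((starRingEnd ℂ) (ψ 0) * ψ 0 + (starRingEnd ℂ) (ψ 1) * ψ 1)
      + s*v*((starRingEnd ℂ) (ψ 0) * ψ 1 + (starRingEnd ℂ) (ψ 1) * ψ 0)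
      + t*u*((starRingEnd ℂ) (ψ 0) * ψ 0 - (starRingEnd ℂ) (ψ 1) * ψ 1)) * hψ

private lemma E_iff_P (a b : ℂ) :
    ((starRingEnd ℂ) a * b - (starRingEnd ℂ) b * a =
      ((starRingEnd ℂ) a * a - (starRingEnd ℂ) b * b) *
      ((starRingEnd ℂ) a * b + (starRingEnd ℂ) b * a)) ↔
    (((starRingEnd ℂ) a * b).im = 0 ∧
      (‖a‖ = ‖b‖ ∨ ((starRingEnd ℂ) a * b).re = 0)) := by
  have habs : ‖a‖ = ‖b‖ ↔ Complex.normSq a = Complex.normSq b := by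
    rw [← Real.sqrt_inj (Complex.normSq_nonneg a) (Complex.normSq_nonneg b)]
    simp [Complex.norm_def]
  rw [habs, Complex.ext_iff]
  simp only [Complex.sub_re, Complex.sub_im, Complex.mul_re, Complex.mul_im,
    Complex.add_re, Complex.add_im, Complex.conj_re, Complex.conj_im, Complex.normSq_apply]
  constructor
  · rintro ⟨h1, h2⟩
    refine ⟨by linear_combination h2/2, ?_⟩
    have hDR : (a.re*a.re + a.im*a.im - b.re*b.re - b.im*b.im) *
        (a.re*b.re + a.im*b.im) = 0 := by linear_combination -h1/2
    rcases mul_eq_zero.mp hDR with h | h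
    · exact Or.inl (by linear_combination h)
    · exact Or.inr (by linear_combination h)
  · rintro ⟨hI, h⟩
    rcases h with h | h
    · exact ⟨by linear_combination (-2*(a.re*b.re + a.im*b.im))*h, by linear_combination 2*hI⟩
    · exact ⟨by linear_combination (-2*(a.re*a.re + a.im*a.im - b.re*b.re - b.im*b.im))*h,
        by linear_combination 2*hI⟩

private lemma P_iff_vectors (ψ : Fin 2 → ℂ) (hn : Complex.normSq (ψ 0) + Complex.normSq (ψ 1) = 1) :
    (((starRingEnd ℂ) (ψ 0) * ψ 1).im = 0 ∧
      (‖ψ 0‖ = ‖ψ 1‖ ∨ ((starRingEnd ℂ) (ψ 0) * ψ 1).re = 0)) ↔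
    ∃ c : ℂ, ‖c‖ = 1 ∧
      (ψ = c • ![1, 0] ∨ ψ = c • ![0, 1] ∨
        ψ = c • ((Real.sqrt 2 : ℂ)⁻¹ • ![1, 1]) ∨
        ψ = c • ((Real.sqrt 2 : ℂ)⁻¹ • ![1, -1])) := by
  set a := ψ 0 with ha
  set b := ψ 1 with hb
  have hs2 : (Real.sqrt 2 : ℝ) > 0 := Real.sqrt_pos.mpr (by norm_num)
  have hs2c : ((Real.sqrt 2 : ℝ) : ℂ) ≠ 0 := by exact_mod_cast hs2.ne'
  have hsq : ((Real.sqrt 2 : ℝ) : ℂ) * ((Real.sqrt 2 : ℝ) : ℂ) = 2 := by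
    norm_cast; rw [Real.mul_self_sqrt (by norm_num)]
  constructor
  · rintro ⟨hI, hor⟩
    rcases hor with habs | hre
    · have hnsq : Complex.normSq a = Complex.normSq b := by
        rw [← Complex.sq_norm, ← Complex.sq_norm, habs]
      have hna : Complex.normSq a = 1/2 := by rw [hnsq] at hn ⊢; linarith
      have hnb : Complex.normSq b = 1/2 := by rw [← hnsq]; exact hna
      set r := ((starRingEnd ℂ) a * b).re with hr
      have hz : (starRingEnd ℂ) a * b = (r : ℂ) := by
        rw [Complex.ext_iff]; simp [hI, hr]
      have hmc : a * (starRingEnd ℂ) a = (1/2 : ℂ) := by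
        rw [Complex.mul_conj, hna]; norm_num
      have hbval : b = 2 * (r : ℂ) * a := by
        have h2 : a * ((starRingEnd ℂ) a * b) = (1/2 : ℂ) * b := by
          rw [← mul_assoc, hmc]
        rw [hz] at h2
        linear_combination -2 * h2
      have hr2 : 4 * (r * r) = 1 := by
        have : Complex.normSq b = Complex.normSq (((2*r : ℝ) : ℂ)) * Complex.normSq a := by
          rw [← Complex.normSq_mul]
          congr 1
          rw [hbval]; push_cast; ring
        rw [hnb, hna, Complex.normSq_ofReal] at this
        nlinarith
      have hcabs : ‖(Real.sqrt 2 : ℂ) * a‖ = 1 := by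
        rw [Complex.norm_def, Complex.normSq_mul, Complex.normSq_ofReal, hna,
          Real.mul_self_sqrt (by norm_num)]
        norm_num
      refine ⟨(Real.sqrt 2 : ℂ) * a, hcabs, ?_⟩
      have hrcase : r = 1/2 ∨ r = -(1/2) := by
        rcases mul_eq_zero.mp (show (2*r - 1) * (2*r + 1) = 0 by nlinarith) with h | h
        · left; linarith
        · right; linarith
      rcases hrcase with h | h
      · have hba : b = a := by rw [hbval, h]; push_cast; ring
        right; right; left
        funext i
        fin_cases i
        · show a = _; simp [Pi.smul_apply, smul_eq_mul]; field_simp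
        · show b = _; rw [hba]; simp [Pi.smul_apply, smul_eq_mul]; field_simp
      · have hba : b = -a := by rw [hbval, h]; push_cast; ring
        right; right; right
        funext i
        fin_cases i
        · show a = _; simp [Pi.smul_apply, smul_eq_mul]; field_simp
        · show b = _; rw [hba]; simp [Pi.smul_apply, smul_eq_mul]; field_simp
    · have hz0 : (starRingEnd ℂ) a * b = 0 := by
        rw [Complex.ext_iff]; simp [hI, hre]
      rcases mul_eq_zero.mp hz0 with h | h
      · have ha0 : a = 0 := by simpa using h
        have hb1 : ‖b‖ = 1 := by
          rw [ha0, Complex.normSq_zero] at hn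
          rw [zero_add] at hn
          rw [Complex.norm_def, hn]; simp
        refine ⟨b, hb1, Or.inr (Or.inl ?_)⟩
        funext i; fin_cases i
        · show a = _; simp [ha0]
        · show b = _; simp
      · have ha1 : ‖a‖ = 1 := by
          rw [h, Complex.normSq_zero] at hn
          rw [Complex.norm_def]; simp at hn; simp [hn]
        refine ⟨a, ha1, Or.inl ?_⟩
        funext i; fin_cases i
        · show a = _; simp
        · show b = _; simp [h]
  · rintro ⟨c, hc, h | h | h | h⟩ <;>
      rw [show a = ψ 0 from ha, show b = ψ 1 from hb, h] <;>
      simp only [Pi.smul_apply, smul_eq_mul, Matrix.cons_val_zero, Matrix.cons_val_one,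
        Matrix.head_cons]
    · exact ⟨by simp, Or.inr (by simp)⟩
    · exact ⟨by simp, Or.inr (by simp)⟩
    · refine ⟨?_, Or.inl (by norm_num)⟩
      simp only [mul_one]
      rw [mul_comm ((starRingEnd ℂ) (c * (↑(Real.sqrt 2) : ℂ)⁻¹)), Complex.mul_conj]
      simp
    · refine ⟨?_, Or.inl (by simp [_root_.map_mul])⟩
      simp only [mul_one]
      rw [show (c * ((↑(Real.sqrt 2) : ℂ)⁻¹ * -1)) = -(c * (↑(Real.sqrt 2) : ℂ)⁻¹) by ring,
        mul_neg, mul_comm ((starRingEnd ℂ) (c * (↑(Real.sqrt 2) : ℂ)⁻¹)), Complex.mul_conj]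
      simp

/-- **Characterization of separable pure vector states of `C₂ ≅ M₂(ℂ)`** for the
bipartition `(span{1,σ₃}, span{1,σ₁})`: a unit vector `ψ = a₁e₁ + a₂e₂` is
separable iff `Im(conj a₁ · a₂) = 0` and (`|a₁| = |a₂|` or `Re(conj a₁ · a₂) = 0`);
equivalently, iff `ψ` is a unimodular multiple of `e₁`, `e₂`, `(e₁+e₂)/√2` or
`(e₁−e₂)/√2`. -/
theorem separable_vectors_C2 (ψ : Fin 2 → ℂ) (hψ : ip2 ψ ψ = 1) :
    ((∀ α ∈ Submodule.span ℂ ({1, pauli3} : Set (Matrix (Fin 2) (Fin 2) ℂ)),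
      ∀ β ∈ Submodule.span ℂ ({1, pauli1} : Set (Matrix (Fin 2) (Fin 2) ℂ)),
        ip2 ψ ((α * β).mulVec ψ) = ip2 ψ (α.mulVec ψ) * ip2 ψ (β.mulVec ψ)) ↔
      (((starRingEnd ℂ) (ψ 0) * ψ 1).im = 0 ∧
        (‖ψ 0‖ = ‖ψ 1‖ ∨
          ((starRingEnd ℂ) (ψ 0) * ψ 1).re = 0))) ∧
    ((∀ α ∈ Submodule.span ℂ ({1, pauli3} : Set (Matrix (Fin 2) (Fin 2) ℂ)),
      ∀ β ∈ Submodule.span ℂ ({1, pauli1} : Set (Matrix (Fin 2) (Fin 2) ℂ)),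
        ip2 ψ ((α * β).mulVec ψ) = ip2 ψ (α.mulVec ψ) * ip2 ψ (β.mulVec ψ)) ↔
      ∃ c : ℂ, ‖c‖ = 1 ∧
        (ψ = c • ![1, 0] ∨ ψ = c • ![0, 1] ∨
          ψ = c • ((Real.sqrt 2 : ℂ)⁻¹ • ![1, 1]) ∨
          ψ = c • ((Real.sqrt 2 : ℂ)⁻¹ • ![1, -1]))) := by
  have h1 := cond_iff_E ψ hψ
  have h2 := E_iff_P (ψ 0) (ψ 1)
  have hn : Complex.normSq (ψ 0) + Complex.normSq (ψ 1) = 1 := by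
    have h := hψ
    simp only [ip2, Fin.sum_univ_two] at h
    have hre := congrArg Complex.re h
    simp only [Complex.add_re, Complex.mul_re, Complex.conj_re, Complex.conj_im,
      Complex.one_re] at hre
    simp only [Complex.normSq_apply]
    linarith
  exact ⟨h1.trans h2, h1.trans (h2.trans (P_iff_vectors ψ hn))⟩
end

section
/- Let ρ = Σ_{i,j∈{1,2}} λ_{ij} |e_i⟩⟨e_j| be a density matrix on ℂ², written in the standard basis e₁, e₂. If the off-diagonal coefficient λ₁₂ has nonzero imaginary part, then ρ is entangled with respect to the bipartition (span_ℂ{1, σ₃}, span_ℂ{1, σ₁}), i.e. ρ is not a finite convex combination of projectors onto separable unit vectors. -/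
open Matrix
open scoped ComplexOrder

/-- A unit vector of `ℂ²` is separable (a product vector state) for the
bipartition `(span{1,σ₃}, span{1,σ₁})` of `C₂ ≅ M₂(ℂ)`. -/
def IsSepVec (ψ : Fin 2 → ℂ) : Prop :=
  ip2 ψ ψ = 1 ∧
  ∀ α ∈ Submodule.span ℂ ({1, pauli3} : Set (Matrix (Fin 2) (Fin 2) ℂ)),
    ∀ β ∈ Submodule.span ℂ ({1, pauli1} : Set (Matrix (Fin 2) (Fin 2) ℂ)),
      ip2 ψ ((α * β).mulVec ψ) = ip2 ψ (α.mulVec ψ) * ip2 ψ (β.mulVec ψ)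

/-- A density matrix on `ℂ²` is separable if it is a finite convex combination
of projectors `|ψ⟩⟨ψ|` onto separable unit vectors. -/
def IsSepDM (ρ : Matrix (Fin 2) (Fin 2) ℂ) : Prop :=
  ∃ (n : ℕ) (μ : Fin n → ℝ) (ψ : Fin n → (Fin 2 → ℂ)),
    (∀ i, 0 ≤ μ i) ∧ (∑ i, μ i) = 1 ∧ (∀ i, IsSepVec (ψ i)) ∧
    ρ = ∑ i, (μ i : ℂ) • Matrix.vecMulVec (ψ i) (star (ψ i))


lemma sep_vec_im (ψ : Fin 2 → ℂ) (h : IsSepVec ψ) :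
    (ψ 0 * (starRingEnd ℂ) (ψ 1)).im = 0 := by
  obtain ⟨-, hsep⟩ := h
  have h3 : pauli3 ∈ Submodule.span ℂ ({1, pauli3} : Set (Matrix (Fin 2) (Fin 2) ℂ)) :=
    Submodule.subset_span (by simp)
  have h1 : pauli1 ∈ Submodule.span ℂ ({1, pauli1} : Set (Matrix (Fin 2) (Fin 2) ℂ)) :=
    Submodule.subset_span (by simp)
  have key := hsep pauli3 h3 pauli1 h1
  simp only [ip2, pauli1, pauli3, Matrix.mulVec, Matrix.mul_apply, Fin.sum_univ_two,
    Matrix.cons_val_zero, Matrix.cons_val_one, Matrix.head_cons, Matrix.head_fin_const,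
    Matrix.cons_val', Matrix.empty_val', Matrix.cons_val_fin_one, Matrix.of_apply,
    dotProduct] at key
  have him := congrArg Complex.im key
  set a := ψ 0
  set b := ψ 1
  simp only [Complex.add_im, Complex.sub_im, Complex.mul_im, Complex.mul_re,
    Complex.conj_re, Complex.conj_im, Complex.neg_im, Complex.neg_re, Complex.add_re,
    Complex.sub_re, Complex.zero_im, Complex.zero_re, Complex.one_im, Complex.one_re,
    map_add, _root_.map_mul, map_sub, map_neg, map_zero, _root_.map_one] at him ⊢
  nlinarith [him]

/-- **Lemma 5**: a density matrix on `ℂ²` whose off-diagonal coefficient has a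
nonzero imaginary part is entangled with respect to the bipartition
`(span{1,σ₃}, span{1,σ₁})`. -/
theorem complex_offdiagonal_entangled
    (ρ : Matrix (Fin 2) (Fin 2) ℂ) (hpos : ρ.PosSemidef) (htr : ρ.trace = 1)
    (him : (ρ 0 1).im ≠ 0) :
    ¬ IsSepDM ρ := by
  rintro ⟨n, μ, ψ, hμ, hsum, hsep, hρ⟩
  apply him
  rw [hρ]
  simp only [Matrix.sum_apply, Matrix.smul_apply, Matrix.vecMulVec_apply,
    Pi.star_apply, RCLike.star_def, smul_eq_mul, Complex.im_sum]
  refine Finset.sum_eq_zero fun i _ => ?_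
  have := sep_vec_im (ψ i) (hsep i)
  simp [Complex.mul_im, Complex.ofReal_im, Complex.ofReal_re, this]
end

section
/- Let ρ = Σ_{i,j∈{1,2}} λ_{ij} |e_i⟩⟨e_j| be a density matrix on ℂ², written in the standard basis e₁, e₂, whose off-diagonal coefficient λ₁₂ is real (hence λ₂₁ = λ₁₂). Then ρ is separable with respect to the bipartition (span_ℂ{1, σ₃}, span_ℂ{1, σ₁}) if and only if λ₁₁ ≥ |λ₁₂| and λ₂₂ ≥ |λ₁₂|. -/
open Matrix
open scoped ComplexOrder

lemma ip2_add (ψ v w : Fin 2 → ℂ) : ip2 ψ (v + w) = ip2 ψ v + ip2 ψ w := by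
  simp [ip2, mul_add, Finset.sum_add_distrib]

lemma ip2_smul (ψ v : Fin 2 → ℂ) (c : ℂ) : ip2 ψ (c • v) = c * ip2 ψ v := by
  simp [ip2, Finset.mul_sum]; ring_nf

lemma ip2_zero (ψ : Fin 2 → ℂ) : ip2 ψ 0 = 0 := by simp [ip2]


lemma sep_beta (ψ : Fin 2 → ℂ) (α : Matrix (Fin 2) (Fin 2) ℂ)
    (h1 : ip2 ψ (α.mulVec ψ) * ip2 ψ ψ = ip2 ψ (α.mulVec ψ))
    (h2 : ip2 ψ ((α * pauli1).mulVec ψ) = ip2 ψ (α.mulVec ψ) * ip2 ψ (pauli1.mulVec ψ)) :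
    ∀ β ∈ Submodule.span ℂ ({1, pauli1} : Set (Matrix (Fin 2) (Fin 2) ℂ)),
      ip2 ψ ((α * β).mulVec ψ) = ip2 ψ (α.mulVec ψ) * ip2 ψ (β.mulVec ψ) := by
  intro β hβ
  induction hβ using Submodule.span_induction with
  | mem x hx =>
    rcases hx with hx | hx
    · subst hx; simpa [Matrix.one_mulVec] using h1.symm
    · subst hx; exact h2
  | zero => simp [Matrix.zero_mulVec, ip2_zero]
  | add x y hx hy ihx ihy =>
    rw [mul_add, Matrix.add_mulVec, ip2_add, Matrix.add_mulVec, ip2_add, ihx, ihy, mul_add]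
  | smul c x hx ih =>
    rw [mul_smul_comm, Matrix.smul_mulVec, ip2_smul, Matrix.smul_mulVec,
      ip2_smul, ih]; ring

lemma isSepVec_of (ψ : Fin 2 → ℂ) (h1 : ip2 ψ ψ = 1)
    (h2 : ip2 ψ ((pauli3 * pauli1).mulVec ψ) =
      ip2 ψ (pauli3.mulVec ψ) * ip2 ψ (pauli1.mulVec ψ)) : IsSepVec ψ := by
  refine ⟨h1, ?_⟩
  intro α hα
  induction hα using Submodule.span_induction with
  | mem x hx =>
    rcases hx with hx | hx
    · subst hx
      refine sep_beta ψ 1 ?_ ?_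
      · rw [Matrix.one_mulVec, h1, mul_one]
      · rw [one_mul, Matrix.one_mulVec, h1, one_mul]
    · subst hx
      refine sep_beta ψ pauli3 ?_ h2
      rw [h1, mul_one]
  | zero => intro β hβ; simp [Matrix.zero_mulVec, ip2_zero]
  | add x y hx hy ihx ihy =>
    intro β hβ
    rw [add_mul, Matrix.add_mulVec, ip2_add, Matrix.add_mulVec, ip2_add, ihx β hβ, ihy β hβ,
      add_mul]
  | smul c x hx ih =>
    intro β hβ
    rw [smul_mul_assoc, Matrix.smul_mulVec, ip2_smul, Matrix.smul_mulVec,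
      ip2_smul, ih β hβ]; ring

lemma pauli31 : pauli3 * pauli1 = !![0, 1; -1, 0] := by
  simp [pauli1, pauli3, Matrix.mul_fin_two]

lemma sep_eqs (ψ : Fin 2 → ℂ) (h : IsSepVec ψ) :
    (starRingEnd ℂ) (ψ 0) * ψ 0 + (starRingEnd ℂ) (ψ 1) * ψ 1 = 1 ∧
    (starRingEnd ℂ) (ψ 0) * ψ 1 - (starRingEnd ℂ) (ψ 1) * ψ 0 =
      ((starRingEnd ℂ) (ψ 0) * ψ 0 - (starRingEnd ℂ) (ψ 1) * ψ 1) *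
      ((starRingEnd ℂ) (ψ 0) * ψ 1 + (starRingEnd ℂ) (ψ 1) * ψ 0) := by
  obtain ⟨h1, h2⟩ := h
  have h2' := h2 pauli3 (Submodule.subset_span (Set.mem_insert_iff.mpr (Or.inr rfl)))
    pauli1 (Submodule.subset_span (Set.mem_insert_iff.mpr (Or.inr rfl)))
  rw [pauli31] at h2'
  simp [ip2, pauli1, pauli3, Matrix.mulVec, dotProduct, Fin.sum_univ_two] at h1 h2'
  constructor
  · linear_combination h1
  · linear_combination h2'

set_option maxHeartbeats 1000000 in
lemma sep_vec_bound (ψ : Fin 2 → ℂ) (h : IsSepVec ψ) :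
    |(ψ 0 * (starRingEnd ℂ) (ψ 1)).re| ≤ (ψ 0 * (starRingEnd ℂ) (ψ 0)).re ∧
    |(ψ 0 * (starRingEnd ℂ) (ψ 1)).re| ≤ (ψ 1 * (starRingEnd ℂ) (ψ 1)).re := by
  obtain ⟨h1, h2⟩ := sep_eqs ψ h
  set p := (ψ 0).re with hp
  set q := (ψ 0).im with hq
  set s := (ψ 1).re with hs
  set t := (ψ 1).im with ht
  simp only [Complex.ext_iff, Complex.mul_re, Complex.mul_im, Complex.add_re, Complex.add_im,
    Complex.sub_re, Complex.sub_im, Complex.conj_re, Complex.conj_im, Complex.one_re,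
    Complex.one_im, ← hp, ← hq, ← hs, ← ht] at h1 h2 ⊢
  obtain ⟨e1, -⟩ := h1
  obtain ⟨e2, e3⟩ := h2
  have hfac : (p^2+q^2-s^2-t^2) * (p*s+q*t) = 0 := by linear_combination (-1/2 : ℝ) * e2
  have hg1 : p * s - q * -t = p*s+q*t := by ring
  rcases mul_eq_zero.mp hfac with hcase | hcase <;>
    constructor <;>
    · rw [hg1, abs_le]
      constructor <;>
        nlinarith [sq_nonneg (p+s), sq_nonneg (q+t), sq_nonneg (p-s), sq_nonneg (q-t),
          sq_nonneg p, sq_nonneg q, sq_nonneg s, sq_nonneg t]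


/-- **Lemma 6**: a density matrix on `ℂ²` with real off-diagonal coefficient
`λ₁₂` is separable with respect to the bipartition `(span{1,σ₃}, span{1,σ₁})`
iff `λ₁₁ ≥ |λ₁₂|` and `λ₂₂ ≥ |λ₁₂|`. -/
theorem real_offdiagonal_separable_iff
    (ρ : Matrix (Fin 2) (Fin 2) ℂ) (hpos : ρ.PosSemidef) (htr : ρ.trace = 1)
    (him : (ρ 0 1).im = 0) :
    IsSepDM ρ ↔
      (|(ρ 0 1).re| ≤ (ρ 0 0).re ∧ |(ρ 0 1).re| ≤ (ρ 1 1).re) := by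

  have herm := hpos.1
  have hconj : ∀ i j, (starRingEnd ℂ) (ρ j i) = ρ i j := by
    intro i j
    have := congrFun (congrFun herm i) j
    simpa [Matrix.conjTranspose_apply] using this
  set a := (ρ 0 0).re with ha
  set d := (ρ 1 1).re with hd
  set b := (ρ 0 1).re with hb
  have h00 : ρ 0 0 = (a : ℂ) := by
    have := hconj 0 0
    apply Complex.ext <;> simp [ha]
    have : (ρ 0 0).im = -(ρ 0 0).im := by
      conv_lhs => rw [← hconj 0 0]
      simp
    linarith
  have h11 : ρ 1 1 = (d : ℂ) := by
    apply Complex.ext <;> simp [hd]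
    have : (ρ 1 1).im = -(ρ 1 1).im := by
      conv_lhs => rw [← hconj 1 1]
      simp
    linarith
  have h01 : ρ 0 1 = (b : ℂ) := by
    apply Complex.ext <;> simp [hb, him]
  have h10 : ρ 1 0 = (b : ℂ) := by
    rw [← hconj 1 0, h01]
    simp [Complex.conj_ofReal]
  have had : a + d = 1 := by
    have : ρ 0 0 + ρ 1 1 = 1 := by
      simpa [Matrix.trace, Fin.sum_univ_two] using htr
    rw [h00, h11] at this
    exact_mod_cast this
  constructor
  · rintro ⟨n, μ, ψ, hμ, hsum, hsep, hρ⟩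
    have entry : ∀ i j : Fin 2, ρ i j = ∑ k, (μ k : ℂ) * (ψ k i * (starRingEnd ℂ) (ψ k j)) := by
      intro i j
      rw [hρ]
      simp [Matrix.sum_apply, Matrix.vecMulVec_apply, Complex.star_def]
    have entry_re : ∀ i j : Fin 2, (ρ i j).re = ∑ k, μ k * (ψ k i * (starRingEnd ℂ) (ψ k j)).re := by
      intro i j
      rw [entry i j, Complex.re_sum]
      refine Finset.sum_congr rfl fun k _ => ?_
      simp [Complex.mul_re]
    have key := fun k => sep_vec_bound (ψ k) (hsep k)
    constructor
    · rw [hb, entry_re 0 1, ha, entry_re 0 0]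
      refine le_trans (Finset.abs_sum_le_sum_abs _ _) (Finset.sum_le_sum fun k _ => ?_)
      rw [abs_mul, abs_of_nonneg (hμ k)]
      exact mul_le_mul_of_nonneg_left (key k).1 (hμ k)
    · rw [hb, entry_re 0 1, hd, entry_re 1 1]
      refine le_trans (Finset.abs_sum_le_sum_abs _ _) (Finset.sum_le_sum fun k _ => ?_)
      rw [abs_mul, abs_of_nonneg (hμ k)]
      exact mul_le_mul_of_nonneg_left (key k).2 (hμ k)
  · rintro ⟨hb1, hb2⟩
    set r : ℝ := Real.sqrt 2 / 2 with hrdef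
    have hr : r * r = 1 / 2 := by
      rw [hrdef, div_mul_div_comm, Real.mul_self_sqrt (by norm_num)]
      norm_num
    have hrc : (r : ℂ) * (r : ℂ) = 1 / 2 := by
      rw [← Complex.ofReal_mul, hr]
      norm_num
    refine ⟨4, ![a - |b|, d - |b|, |b| + b, |b| - b],
      ![![1, 0], ![0, 1], ![(r : ℂ), (r : ℂ)], ![(r : ℂ), -(r : ℂ)]], ?_, ?_, ?_, ?_⟩
    · intro i
      fin_cases i <;> simp <;>
        [linarith [abs_nonneg b]; linarith [abs_nonneg b]; linarith [neg_abs_le b];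
         linarith [le_abs_self b]]
    · rw [Fin.sum_univ_four]
      simp only [Matrix.cons_val_zero, Matrix.cons_val_one, Matrix.head_cons,
        Matrix.cons_val_two, Matrix.cons_val_three, Matrix.tail_cons]
      linarith
    · intro i
      fin_cases i <;> apply isSepVec_of <;>
        simp [ip2, pauli1, pauli3, pauli31, Matrix.mulVec, dotProduct,
          Fin.sum_univ_two, Complex.conj_ofReal] <;>
        linear_combination 2 * hrc
    · ext i j
      rw [Matrix.sum_apply]
      fin_cases i <;> fin_cases j <;>
        simp only [Fin.mk_zero, Fin.mk_one, Fin.isValue, Fin.sum_univ_four, Matrix.smul_apply,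
          Matrix.vecMulVec_apply, Pi.star_apply, Complex.star_def, smul_eq_mul,
          Matrix.cons_val_zero, Matrix.cons_val_one, Matrix.head_cons, Matrix.cons_val_two,
          Matrix.cons_val_three, Matrix.tail_cons, Complex.conj_ofReal, _root_.map_zero,
          _root_.map_one, map_neg, h00, h01, h10, h11] <;>
        push_cast <;>
        [linear_combination (-2 * ((|b| : ℝ) : ℂ)) * hrc;
         linear_combination (-2 * (b : ℂ)) * hrc;
         linear_combination (-2 * (b : ℂ)) * hrc;
         linear_combination (-2 * ((|b| : ℝ) : ℂ)) * hrc]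
end

section
/- For n ≥ 2 and real numbers ω₁,…,ω_n, let J = i Σ_{k=1}^{n} ω_k m_{2k−1} m_{2k} ∈ M_{2ⁿ}(ℂ), let γ = m₁ m_{n+1} and F = (1 + iγ)/√2. Then 2^{−n}Tr(F* J F) = 0 and 2^{−n}Tr(F* J² F) = Σ_{k=1}^{n} ω_k². Consequently the variance of the (self-adjoint) operator J in the unit vector state x ↦ 2^{−n}Tr(F* x F) equals Σ_{k=1}^{n} ω_k². -/
open Matrix

/- ### tensor product infrastructure -/

noncomputable def tM (n : ℕ) (f : Fin n → Matrix (Fin 2) (Fin 2) ℂ) :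
    Matrix (Fin n → Fin 2) (Fin n → Fin 2) ℂ := fun x y => ∏ i, f i (x i) (y i)

lemma tM_mul (n : ℕ) (f g : Fin n → Matrix (Fin 2) (Fin 2) ℂ) :
    tM n f * tM n g = tM n (fun i => f i * g i) := by
  ext x y
  simp only [tM, Matrix.mul_apply]
  rw [Fintype.prod_sum (fun i j => f i (x i) j * g i j (y i))]
  simp [Finset.prod_mul_distrib]

lemma tM_one (n : ℕ) : tM n (fun _ => 1) = 1 := by
  ext x y
  simp only [tM, Matrix.one_apply]
  by_cases h : x = y
  · subst h; simp
  · rw [if_neg h]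
    obtain ⟨i, hi⟩ := Function.ne_iff.mp h
    exact Finset.prod_eq_zero (Finset.mem_univ i) (by simp [Matrix.one_apply, hi])

lemma tM_trace (n : ℕ) (f : Fin n → Matrix (Fin 2) (Fin 2) ℂ) :
    (tM n f).trace = ∏ i, (f i).trace := by
  simp only [Matrix.trace, Matrix.diag, tM]
  rw [← Fintype.prod_sum (fun i j => f i j j)]

lemma tM_trace_zero {n : ℕ} (f : Fin n → Matrix (Fin 2) (Fin 2) ℂ) (i₀ : Fin n)
    (h : (f i₀).trace = 0) : (tM n f).trace = 0 := by
  rw [tM_trace]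
  exact Finset.prod_eq_zero (Finset.mem_univ i₀) h

lemma tM_conjT (n : ℕ) (f : Fin n → Matrix (Fin 2) (Fin 2) ℂ) :
    (tM n f)ᴴ = tM n (fun i => (f i)ᴴ) := by
  ext x y
  simp only [tM, Matrix.conjTranspose_apply]
  exact map_prod (starRingEnd ℂ) _ _

lemma tM_smul (n : ℕ) (c : Fin n → ℂ) (f : Fin n → Matrix (Fin 2) (Fin 2) ℂ) :
    tM n (fun i => c i • f i) = (∏ i, c i) • tM n f := by
  ext x y
  simp [tM, Finset.prod_mul_distrib, Matrix.smul_apply, smul_eq_mul]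

lemma tM_congr {n : ℕ} {f g : Fin n → Matrix (Fin 2) (Fin 2) ℂ} (h : ∀ i, f i = g i) :
    tM n f = tM n g := by
  have : f = g := funext h
  rw [this]

lemma prod_ite_val {n m : ℕ} (hm : m < n) (c : ℂ) :
    ∏ i : Fin n, (if (i : ℕ) = m then c else 1) = c := by
  rw [Finset.prod_eq_single_of_mem (⟨m, hm⟩ : Fin n) (Finset.mem_univ _)
    (fun x _ hx => if_neg (fun h => hx (Fin.ext h)))]
  simp

/- ### Pauli computations -/

lemma p33 : pauli3 * pauli3 = 1 := by
  ext i j; fin_cases i <;> fin_cases j <;>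
    simp [pauli3, Matrix.mul_apply, Fin.sum_univ_two, Matrix.one_apply]

lemma p11 : pauli1 * pauli1 = 1 := by
  ext i j; fin_cases i <;> fin_cases j <;>
    simp [pauli1, Matrix.mul_apply, Fin.sum_univ_two, Matrix.one_apply]

lemma p22 : pauli2 * pauli2 = 1 := by
  ext i j; fin_cases i <;> fin_cases j <;>
    simp [pauli2, Matrix.mul_apply, Fin.sum_univ_two, Matrix.one_apply, Complex.I_mul_I]

lemma p12 : pauli1 * pauli2 = Complex.I • pauli3 := by
  ext i j; fin_cases i <;> fin_cases j <;>
    simp [pauli1, pauli2, pauli3, Matrix.mul_apply, Fin.sum_univ_two]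

lemma p13sq : (pauli1 * pauli3) * (pauli1 * pauli3) = (-1 : Matrix (Fin 2) (Fin 2) ℂ) := by
  ext i j; fin_cases i <;> fin_cases j <;>
    simp [pauli1, pauli3, Matrix.mul_apply, Fin.sum_univ_two, Matrix.one_apply]

lemma p13H : (pauli1 * pauli3)ᴴ = -(pauli1 * pauli3) := by
  ext i j; fin_cases i <;> fin_cases j <;>
    simp [pauli1, pauli3, Matrix.mul_apply, Fin.sum_univ_two, Matrix.conjTranspose_apply]

lemma p1H : pauli1ᴴ = pauli1 := by
  ext i j; fin_cases i <;> fin_cases j <;> simp [pauli1, Matrix.conjTranspose_apply]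

lemma p2H : pauli2ᴴ = pauli2 := by
  ext i j; fin_cases i <;> fin_cases j <;> simp [pauli2, Matrix.conjTranspose_apply]

lemma p3H : pauli3ᴴ = pauli3 := by
  ext i j; fin_cases i <;> fin_cases j <;> simp [pauli3, Matrix.conjTranspose_apply]

lemma p31 : pauli3 * pauli1 = -(pauli1 * pauli3) := by
  ext i j; fin_cases i <;> fin_cases j <;>
    simp [pauli1, pauli3, Matrix.mul_apply, Fin.sum_univ_two]

lemma ppsq : (Complex.I • pauli3) * (Complex.I • pauli3) = (-1 : Matrix (Fin 2) (Fin 2) ℂ) := by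
  rw [smul_mul_assoc, mul_smul_comm, smul_smul, Complex.I_mul_I, p33]; simp

lemma t13 : (pauli1 * pauli3).trace = 0 := by
  simp [pauli1, pauli3, Matrix.trace_fin_two, Matrix.mul_apply, Fin.sum_univ_two]

lemma tI3 : (Complex.I • pauli3).trace = 0 := by
  simp [pauli3, Matrix.trace_fin_two]

lemma t13I : ((pauli1 * pauli3) * (Complex.I • pauli3)).trace = 0 := by
  simp [pauli1, pauli3, Matrix.trace_fin_two, Matrix.mul_apply, Fin.sum_univ_two]

lemma t3tr : pauli3.trace = 0 := by simp [pauli3, Matrix.trace_fin_two]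

lemma t133 : (pauli1 * pauli3 * pauli3).trace = 0 := by
  simp [pauli1, pauli3, Matrix.trace_fin_two, Matrix.mul_apply, Fin.sum_univ_two]

lemma t1333 : (pauli1 * pauli3 * (pauli3 * pauli3)).trace = 0 := by
  simp [pauli1, pauli3, Matrix.trace_fin_two, Matrix.mul_apply, Fin.sum_univ_two]

/- ### site functions -/

noncomputable def gf (n : ℕ) : Fin n → Matrix (Fin 2) (Fin 2) ℂ := fun i =>
  if (i : ℕ) = 0 then pauli1 * pauli3
  else if (i : ℕ) < n / 2 then pauli3
  else if (i : ℕ) = n / 2 then (if n % 2 = 0 then pauli1 else pauli2)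
  else 1

noncomputable def pf (n : ℕ) (k : Fin n) : Fin n → Matrix (Fin 2) (Fin 2) ℂ := fun i =>
  if (i : ℕ) = (k : ℕ) then Complex.I • pauli3 else 1

lemma maj_eq (n : ℕ) (j : Fin (2 * n)) :
    majorana n j = tM n (fun i =>
      if (i : ℕ) < (j : ℕ) / 2 then pauli3
      else if (i : ℕ) = (j : ℕ) / 2 then (if (j : ℕ) % 2 = 0 then pauli1 else pauli2)
      else 1) := rfl

lemma majP (n : ℕ) (k : Fin n) (h1 : 2 * (k : ℕ) < 2 * n) (h2 : 2 * (k : ℕ) + 1 < 2 * n) :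
    majorana n ⟨2 * (k : ℕ), h1⟩ * majorana n ⟨2 * (k : ℕ) + 1, h2⟩ = tM n (pf n k) := by
  rw [maj_eq, maj_eq, tM_mul]
  apply tM_congr; intro i
  have e1 : (2 * (k : ℕ)) / 2 = (k : ℕ) := by omega
  have e2 : (2 * (k : ℕ) + 1) / 2 = (k : ℕ) := by omega
  have e3 : (2 * (k : ℕ)) % 2 = 0 := by omega
  have e4 : (2 * (k : ℕ) + 1) % 2 = 1 := by omega
  simp only [Fin.val_mk, e1, e2, e3, e4, pf]
  rcases lt_trichotomy (i : ℕ) (k : ℕ) with h | h | h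
  · simp [h, Nat.ne_of_lt h, p33]
  · simp [h, p12]
  · have h5 : ¬ (i : ℕ) < (k : ℕ) := by omega
    have h6 : ¬ (i : ℕ) = (k : ℕ) := by omega
    simp [h5, h6]

lemma majγ (n : ℕ) (hn : 2 ≤ n) (h1 : 0 < 2 * n) (h2 : n < 2 * n) :
    majorana n ⟨0, h1⟩ * majorana n ⟨n, h2⟩ = tM n (gf n) := by
  rw [maj_eq, maj_eq, tM_mul]
  apply tM_congr; intro i
  simp only [Fin.val_mk, Nat.zero_div, Nat.zero_mod, Nat.not_lt_zero, if_false, if_true, gf]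
  by_cases h : (i : ℕ) = 0
  · have h3 : 0 < n / 2 := by omega
    have h4 : ¬ ((0 : ℕ) = n / 2) := by omega
    simp [h, h3, h4]
  · simp [h, Nat.pos_of_ne_zero h]

/- ### squares, adjoints, traces of site tensors -/

lemma gf_sq (n : ℕ) (hn : 2 ≤ n) : tM n (gf n) * tM n (gf n) = -1 := by
  rw [tM_mul]
  have h : (fun i : Fin n => gf n i * gf n i)
      = fun i : Fin n => (if (i : ℕ) = 0 then (-1 : ℂ) else 1) • (1 : Matrix (Fin 2) (Fin 2) ℂ) := by
    funext i
    unfold gf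
    by_cases h0 : (i : ℕ) = 0
    · simp [h0, p13sq]
    · by_cases hlt : (i : ℕ) < n / 2
      · simp [h0, hlt, p33]
      · by_cases heq : (i : ℕ) = n / 2
        · have hz : ¬ (n / 2 = 0) := by omega
          by_cases hm : n % 2 = 0 <;> simp [h0, hlt, heq, hm, hz, p11, p22]
        · simp [h0, hlt, heq]
  rw [h, tM_smul, prod_ite_val (by omega : 0 < n), tM_one]
  simp

lemma pf_sq (n : ℕ) (k : Fin n) : tM n (pf n k) * tM n (pf n k) = -1 := by
  rw [tM_mul]
  have h : (fun i : Fin n => pf n k i * pf n k i)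
      = fun i : Fin n => (if (i : ℕ) = (k : ℕ) then (-1 : ℂ) else 1) • (1 : Matrix (Fin 2) (Fin 2) ℂ) := by
    funext i
    unfold pf
    by_cases h0 : (i : ℕ) = (k : ℕ) <;>
      simp [h0, smul_mul_assoc, mul_smul_comm, smul_smul, Complex.I_mul_I, p33]
  rw [h, tM_smul, prod_ite_val k.2, tM_one]
  simp

lemma gf_conjT (n : ℕ) (hn : 2 ≤ n) : (tM n (gf n))ᴴ = -(tM n (gf n)) := by
  rw [tM_conjT]
  have h : (fun i : Fin n => (gf n i)ᴴ)
      = fun i : Fin n => (if (i : ℕ) = 0 then (-1 : ℂ) else 1) • gf n i := by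
    funext i
    unfold gf
    by_cases h0 : (i : ℕ) = 0
    · simp [h0, Matrix.conjTranspose_mul, p1H, p3H, p31]
    · by_cases hlt : (i : ℕ) < n / 2
      · simp [h0, hlt, p3H]
      · by_cases heq : (i : ℕ) = n / 2
        · have hz : ¬ (n / 2 = 0) := by omega
          by_cases hm : n % 2 = 0 <;> simp [h0, hlt, heq, hm, hz, p1H, p2H]
        · simp [h0, hlt, heq]
  rw [h, tM_smul, prod_ite_val (by omega : 0 < n)]
  simp

lemma tr_pf (n : ℕ) (k : Fin n) : (tM n (pf n k)).trace = 0 := by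
  refine tM_trace_zero _ k ?_
  simp [pf, t3tr]

lemma tr_pf_pf (n : ℕ) (k l : Fin n) (hkl : k ≠ l) :
    (tM n (pf n k) * tM n (pf n l)).trace = 0 := by
  rw [tM_mul]
  refine tM_trace_zero _ k ?_
  have : ¬ ((k : ℕ) = (l : ℕ)) := fun h => hkl (Fin.ext h)
  simp [pf, this, t3tr]

lemma tr_gf_x (n : ℕ) (hn : 2 ≤ n) (f : Fin n → Matrix (Fin 2) (Fin 2) ℂ)
    (hf : ((pauli1 * pauli3) * f ⟨0, by omega⟩).trace = 0) :
    (tM n (gf n) * tM n f).trace = 0 := by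
  rw [tM_mul]
  refine tM_trace_zero _ ⟨0, by omega⟩ ?_
  have h0 : ((⟨0, by omega⟩ : Fin n) : ℕ) = 0 := rfl
  simpa [gf, h0] using hf

lemma tr_gf_pf (n : ℕ) (hn : 2 ≤ n) (k : Fin n) :
    (tM n (gf n) * tM n (pf n k)).trace = 0 := by
  refine tr_gf_x n hn _ ?_
  by_cases h : (0 : ℕ) = (k : ℕ) <;> simp [pf, h, t13, t133]

lemma tr_gf_pf_pf (n : ℕ) (hn : 2 ≤ n) (k l : Fin n) :
    (tM n (gf n) * (tM n (pf n k) * tM n (pf n l))).trace = 0 := by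
  rw [tM_mul]
  refine tr_gf_x n hn _ ?_
  by_cases h : (0 : ℕ) = (k : ℕ) <;> by_cases h' : (0 : ℕ) = (l : ℕ) <;>
    simp [pf, h, h', apply_ite Matrix.trace, t13, t133, t1333]

/- ### main calculation -/

lemma trace_neg_one (n : ℕ) :
    (-1 : Matrix (Fin n → Fin 2) (Fin n → Fin 2) ℂ).trace = -((2 : ℂ) ^ n) := by
  rw [Matrix.trace_neg, Matrix.trace_one]
  norm_num [Fintype.card_fun]

lemma main_calc (n : ℕ) (hn : 2 ≤ n) (w : Fin n → ℝ)
    (h0 : 0 < 2 * n) (hn2 : n < 2 * n) (hk1 : ∀ k : Fin n, 2 * (k : ℕ) < 2 * n)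
    (hk2 : ∀ k : Fin n, 2 * (k : ℕ) + 1 < 2 * n)
    (γ F J : Matrix (Fin n → Fin 2) (Fin n → Fin 2) ℂ)
    (hγ : γ = majorana n ⟨0, h0⟩ * majorana n ⟨n, hn2⟩)
    (hF : F = ((Real.sqrt 2 : ℂ))⁻¹ • (1 + Complex.I • γ))
    (hJ : J = Complex.I • ∑ k : Fin n, (w k : ℂ) •
        (majorana n ⟨2 * (k : ℕ), hk1 k⟩ * majorana n ⟨2 * (k : ℕ) + 1, hk2 k⟩)) :
    ((2 : ℂ) ^ n)⁻¹ * (Fᴴ * J * F).trace = 0 ∧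
    ((2 : ℂ) ^ n)⁻¹ * (Fᴴ * (J * J) * F).trace = ∑ k : Fin n, ((w k : ℂ)) ^ 2 := by
  have hγ' : γ = tM n (gf n) := by rw [hγ, majγ n hn]
  set S : Matrix (Fin n → Fin 2) (Fin n → Fin 2) ℂ :=
    ∑ k : Fin n, (w k : ℂ) • tM n (pf n k) with hS
  have hJ' : J = Complex.I • S := by
    rw [hJ, hS]; congr 1
    exact Finset.sum_congr rfl (fun k _ => by rw [majP n k])
  set s : ℂ := ((Real.sqrt 2 : ℂ))⁻¹ with hs
  have h2 : ((Real.sqrt 2 : ℝ) : ℂ) * ((Real.sqrt 2 : ℝ) : ℂ) = 2 := by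
    rw [← Complex.ofReal_mul, Real.mul_self_sqrt (by norm_num)]
    norm_num
  have hss : s * s * 2 = 1 := by
    rw [hs, ← mul_inv, h2]
    norm_num
  have hγH : γᴴ = -γ := by rw [hγ']; exact gf_conjT n hn
  have hγ2 : γ * γ = -1 := by rw [hγ']; exact gf_sq n hn
  have hFH : Fᴴ = F := by
    rw [hF, Matrix.conjTranspose_smul, Matrix.conjTranspose_add, Matrix.conjTranspose_one,
      Matrix.conjTranspose_smul, hγH]
    simp [hs, Complex.star_def, Complex.conj_I, Complex.conj_ofReal]
  have hAA : (Complex.I • γ) * (Complex.I • γ) = 1 := by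
    rw [Matrix.smul_mul, Matrix.mul_smul, smul_smul, Complex.I_mul_I, hγ2]
    simp
  have h1 : (1 + Complex.I • γ) * (1 + Complex.I • γ) = (2 : ℂ) • (1 + Complex.I • γ) := by
    rw [mul_add, add_mul, add_mul, hAA]
    simp only [one_mul, mul_one]
    module
  have hFF : F * F = 1 + Complex.I • γ := by
    rw [hF, Matrix.smul_mul, Matrix.mul_smul, smul_smul, h1, smul_smul, mul_comm (s * s) 2,
      mul_comm 2 (s * s)]
    rw [hss, one_smul]
  have trS : S.trace = 0 := by
    simp [hS, Matrix.trace_sum, Matrix.trace_smul, tr_pf]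
  have trγS : (γ * S).trace = 0 := by
    rw [hγ', hS, Matrix.mul_sum]
    simp [Matrix.mul_smul, Matrix.trace_sum, Matrix.trace_smul, tr_gf_pf n hn]
  have trPP : ∀ k : Fin n, (((w k : ℂ) • tM n (pf n k)) * ((w k : ℂ) • tM n (pf n k))).trace
      = ((w k : ℂ)) ^ 2 * (-((2 : ℂ) ^ n)) := by
    intro k
    rw [Matrix.smul_mul, Matrix.mul_smul, smul_smul, Matrix.trace_smul, pf_sq, trace_neg_one,
      smul_eq_mul]
    ring
  have trSS : (S * S).trace = (∑ k : Fin n, ((w k : ℂ)) ^ 2) * (-((2 : ℂ) ^ n)) := by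
    rw [hS, Finset.sum_mul_sum, Matrix.trace_sum, Finset.sum_mul]
    refine Finset.sum_congr rfl (fun k _ => ?_)
    rw [Matrix.trace_sum, Finset.sum_eq_single_of_mem k (Finset.mem_univ k) ?_, trPP]
    intro l _ hlk
    rw [Matrix.smul_mul, Matrix.mul_smul, smul_smul, Matrix.trace_smul,
      tr_pf_pf n k l (fun h => hlk h.symm)]
    simp
  have trγSS : (γ * (S * S)).trace = 0 := by
    rw [hγ', hS, Finset.sum_mul_sum, Matrix.mul_sum, Matrix.trace_sum]
    refine Finset.sum_eq_zero (fun k _ => ?_)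
    rw [Matrix.mul_sum, Matrix.trace_sum]
    refine Finset.sum_eq_zero (fun l _ => ?_)
    simp only [Matrix.mul_smul, Matrix.smul_mul, Matrix.trace_smul, smul_smul]
    rw [tr_gf_pf_pf n hn, smul_zero]
  have h2n : ((2 : ℂ) ^ n) ≠ 0 := pow_ne_zero _ two_ne_zero
  constructor
  · rw [hFH, Matrix.trace_mul_cycle, hFF, hJ', add_mul, one_mul, Matrix.trace_add,
      Matrix.trace_smul, Matrix.smul_mul, Matrix.mul_smul, smul_smul, Complex.I_mul_I,
      Matrix.trace_smul, trS, trγS]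
    simp
  · rw [hFH, Matrix.trace_mul_cycle, hFF, hJ']
    have hJJ : (Complex.I • S) * (Complex.I • S) = (-1 : ℂ) • (S * S) := by
      rw [Matrix.smul_mul, Matrix.mul_smul, smul_smul, Complex.I_mul_I]
    rw [hJJ, add_mul, one_mul, Matrix.trace_add, Matrix.trace_smul, Matrix.mul_smul,
      Matrix.trace_smul, Matrix.smul_mul, Matrix.trace_smul, trγSS, trSS]
    field_simp
    simp


open Matrix

/-- **Quantum Fisher information computation**: for the local generator
`J = iΣ_k ω_k m_{2k−1}m_{2k}` and the entangled state `F = (1 + iγ)/√2`,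
`γ = m₁m_{n+1}`, the mean of `J` vanishes, the mean of `J²` is `Σ_k ω_k²`, and
hence the variance of `J` in this state equals `Σ_k ω_k²`. -/
theorem fisher_information_majorana (n : ℕ) (hn : 2 ≤ n) (w : Fin n → ℝ) :
    let γ : Matrix (Fin n → Fin 2) (Fin n → Fin 2) ℂ :=
      majorana n ⟨0, by omega⟩ * majorana n ⟨n, by omega⟩
    let F : Matrix (Fin n → Fin 2) (Fin n → Fin 2) ℂ :=
      ((Real.sqrt 2 : ℂ))⁻¹ • (1 + Complex.I • γ)
    let J : Matrix (Fin n → Fin 2) (Fin n → Fin 2) ℂ :=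
      Complex.I • ∑ k : Fin n,
        (w k : ℂ) •
          (majorana n ⟨2 * (k : ℕ), by omega⟩ *
            majorana n ⟨2 * (k : ℕ) + 1, by omega⟩)
    ((2 : ℂ) ^ n)⁻¹ * (Fᴴ * J * F).trace = 0 ∧
    ((2 : ℂ) ^ n)⁻¹ * (Fᴴ * (J * J) * F).trace = ∑ k : Fin n, ((w k : ℂ)) ^ 2 ∧
    ((2 : ℂ) ^ n)⁻¹ * (Fᴴ * (J * J) * F).trace -
        (((2 : ℂ) ^ n)⁻¹ * (Fᴴ * J * F).trace) ^ 2 =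
      ∑ k : Fin n, ((w k : ℂ)) ^ 2 := by
  intro γ F J
  obtain ⟨h1, h2⟩ := main_calc n hn w (by omega) (by omega) (fun k => by omega) (fun k => by omega)
    γ F J rfl rfl rfl
  exact ⟨h1, h2, by rw [h1, h2]; ring⟩
end
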